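/- arXiv:1301.6112 — 7 statements merged into one kernel-verified Lean document; each statement's English description precedes it below -/
import Mathlib

section
/- If K ⊂ ℝ² is a nonempty compact body (compact set equal to the closure of its interior) and K is connected, then the conic function F_K(x,y) = (1/A(K)) ∫_K (|x−α| + |y−β|) dα dβ has a unique global minimizer (x*,y*) ∈ ℝ², and F_K(x,y) > F_K(x*,y*) for all (x,y) ≠ (x*,y*). -/
open MeasureTheory

open Set in
lemma absid (x m t : ℝ) (hxm : x < m) :
    |x - t| - |m - t| = 2 * min (max (t - x) 0) (m - x) - (m - x) := by
  rcases le_total t x with h | h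
  · rw [abs_of_nonneg (by linarith), abs_of_nonneg (by linarith),
      max_eq_right (by linarith), min_eq_left (by linarith)]
    ring
  · rcases le_total t m with h2 | h2
    · rw [abs_of_nonpos (by linarith), abs_of_nonneg (by linarith),
        max_eq_left (by linarith), min_eq_left (by linarith)]
      ring
    · rw [abs_of_nonpos (by linarith), abs_of_nonpos (by linarith),
        max_eq_left (by linarith), min_eq_right (by linarith)]
      ring

lemma helper (ν : Measure ℝ) [IsFiniteMeasure ν]
    (hint : ∀ x : ℝ, Integrable (fun t => |x - t|) ν)
    (m x : ℝ) (hxm : x < m)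
    (hIci : ν Set.univ / 2 ≤ ν (Set.Ici m))
    (hIoo : 0 < ν (Set.Ioo x m)) :
    (∫ t, |m - t| ∂ν) < ∫ t, |x - t| ∂ν := by
  set T : ℝ := (ν Set.univ).toReal with hT
  set ψ : ℝ → ℝ := fun t => 2 * min (max (t - x) 0) (m - x) with hψ
  have hψeq : (fun t => |x - t| - |m - t|) = fun t => ψ t - (m - x) := by
    funext t; exact absid x m t hxm
  have hψint : Integrable ψ ν := by
    have : ψ = fun t => (|x - t| - |m - t|) + (m - x) := by
      funext t; have := absid x m t hxm; simp only [hψ]; linarith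
    rw [this]; exact ((hint x).sub (hint m)).add (integrable_const _)
  have hψ0 : ∀ t, 0 ≤ ψ t := fun t =>
    mul_nonneg (by norm_num) (le_min (le_max_right _ _) (by linarith))
  -- split
  have hsub : (∫ t, |x - t| ∂ν) - ∫ t, |m - t| ∂ν = (∫ t, ψ t ∂ν) - (m - x) * T := by
    rw [← integral_sub (hint x) (hint m)]
    calc ∫ t, (|x - t| - |m - t|) ∂ν = ∫ t, (ψ t - (m - x)) ∂ν := by rw [hψeq]
      _ = (∫ t, ψ t ∂ν) - ∫ _t, (m - x) ∂ν := integral_sub hψint (integrable_const _)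
      _ = (∫ t, ψ t ∂ν) - (m - x) * T := by
          rw [integral_const]; simp [hT, mul_comm, Measure.restrict_univ, Measure.real]
  have hmono : (m - x) * T < ∫ t, ψ t ∂ν := by
    have hU : ∫ t in (Set.Ici m ∪ Set.Ioo x m), ψ t ∂ν ≤ ∫ t, ψ t ∂ν :=
      setIntegral_le_integral hψint (Filter.Eventually.of_forall hψ0)
    have hdisj : Disjoint (Set.Ici m) (Set.Ioo x m) := by
      simp only [Set.disjoint_left]; rintro t ht ⟨_, h2⟩; exact absurd ht (not_le.2 h2)
    have hsplit : ∫ t in (Set.Ici m ∪ Set.Ioo x m), ψ t ∂ν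
        = (∫ t in Set.Ici m, ψ t ∂ν) + ∫ t in Set.Ioo x m, ψ t ∂ν :=
      setIntegral_union hdisj measurableSet_Ioo hψint.integrableOn hψint.integrableOn
    have h1 : (m - x) * T ≤ ∫ t in Set.Ici m, ψ t ∂ν := by
      have hconst : ∀ t ∈ Set.Ici m, ψ t = 2 * (m - x) := by
        intro t ht
        rw [hψ]; simp only
        rw [max_eq_left (by simp at ht; linarith), min_eq_right (by simp at ht; linarith)]
      rw [setIntegral_congr_fun measurableSet_Ici hconst, setIntegral_const]
      have hTci : T / 2 ≤ (ν (Set.Ici m)).toReal := by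
        have := ENNReal.toReal_mono (measure_ne_top ν _) hIci
        rwa [ENNReal.toReal_div, ENNReal.toReal_ofNat] at this
      rw [smul_eq_mul]
      show (m - x) * T ≤ (ν (Set.Ici m)).toReal * (2 * (m - x))
      nlinarith [mul_nonneg (by linarith : (0:ℝ) ≤ 2 * (ν (Set.Ici m)).toReal - T)
        (by linarith : (0:ℝ) ≤ m - x)]
    have h2 : 0 < ∫ t in Set.Ioo x m, ψ t ∂ν := by
      rw [setIntegral_pos_iff_support_of_nonneg_ae
        (Filter.Eventually.of_forall fun t => hψ0 t : 0 ≤ᵐ[ν.restrict (Set.Ioo x m)] ψ)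
        hψint.integrableOn]
      refine lt_of_lt_of_le hIoo (measure_mono ?_)
      intro t ht
      constructor
      · simp only [Function.mem_support, hψ]
        have : 0 < min (max (t - x) 0) (m - x) := by
          obtain ⟨h1', h2'⟩ := ht
          rw [max_eq_left (by linarith)]
          exact lt_min (by linarith) (by linarith)
        positivity
      · exact ht
    linarith
  linarith

open Set in
lemma oned (ν : Measure ℝ) [IsFiniteMeasure ν] (hν : ν ≠ 0)
    (hint : ∀ x : ℝ, Integrable (fun t => |x - t|) ν)
    (hatom : ∀ t : ℝ, ν {t} = 0)
    (a b : ℝ) (hab : a < b) (ha : ν (Set.Iio a) = 0) (hb : ν (Set.Ioi b) = 0)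
    (hdense : ∀ u v : ℝ, u < v → a < v → u < b → 0 < ν (Set.Ioo u v)) :
    ∃ m : ℝ, ∀ x : ℝ, x ≠ m → (∫ t, |m - t| ∂ν) < ∫ t, |x - t| ∂ν := by
  set U := ν Set.univ with hU
  have hU0 : U ≠ 0 := by simpa [hU] using hν
  have hUtop : U ≠ ⊤ := measure_ne_top ν _
  have hhalf0 : U / 2 ≠ 0 := by
    simp [ENNReal.div_eq_zero_iff, hU0]
  set S : Set ℝ := {x | U / 2 ≤ ν (Set.Iic x)} with hS
  have hbS : b ∈ S := by
    have : ν (Set.Iic b) = U := by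
      have : Set.Iic b = (Set.Ioi b)ᶜ := by simp
      rw [this, measure_compl measurableSet_Ioi (measure_ne_top ν _), hb, tsub_zero]
    simp only [hS, Set.mem_setOf_eq, this]
    exact ENNReal.half_le_self
  have hSne : S.Nonempty := ⟨b, hbS⟩
  have hSlb : ∀ x ∈ S, a ≤ x := by
    intro x hx
    by_contra h
    push_neg at h
    have : ν (Set.Iic x) = 0 :=
      measure_mono_null (fun t ht => lt_of_le_of_lt ht h) ha
    rw [hS, Set.mem_setOf_eq, this, le_zero_iff] at hx
    exact hhalf0 hx
  have hSbdd : BddBelow S := ⟨a, hSlb⟩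
  set m := sInf S with hm
  have ham : a ≤ m := le_csInf hSne hSlb
  -- property 1 : U/2 ≤ ν (Iic m)
  have hIic : U / 2 ≤ ν (Set.Iic m) := by
    have hinter : Set.Iic m = ⋂ n : ℕ, Set.Iic (m + 1 / (n + 1)) := by
      ext t
      simp only [Set.mem_Iic, Set.mem_iInter]
      constructor
      · intro h n; have : (0:ℝ) < 1 / (n + 1) := by positivity
        linarith
      · intro h
        by_contra hlt
        push_neg at hlt
        obtain ⟨n, hn⟩ := exists_nat_one_div_lt (show (0:ℝ) < t - m by linarith)
        have := h n
        linarith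
    have hanti : Antitone fun n : ℕ => Set.Iic (m + 1 / (n + 1)) := by
      intro i j hij
      apply Set.Iic_subset_Iic.2
      have : (1:ℝ) / (j + 1) ≤ 1 / (i + 1) := by
        apply one_div_le_one_div_of_le (by positivity)
        have hji : (i:ℝ) ≤ (j:ℝ) := Nat.cast_le.2 hij; linarith
      linarith
    rw [hinter, hanti.measure_iInter (fun n => measurableSet_Iic.nullMeasurableSet)
      ⟨0, measure_ne_top ν _⟩]
    refine le_iInf fun n => ?_
    have hpos : (0:ℝ) < 1 / (n + 1) := by positivity
    obtain ⟨s, hsS, hs⟩ := csInf_lt_iff hSbdd hSne |>.1 (show sInf S < m + 1 / (n+1) by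
      rw [← hm]; linarith)
    exact le_trans hsS (measure_mono (Set.Iic_subset_Iic.2 hs.le))
  -- property 2 : U/2 ≤ ν (Ici m)
  have hIci : U / 2 ≤ ν (Set.Ici m) := by
    have hIio : ν (Set.Iio m) ≤ U / 2 := by
      have hunion : Set.Iio m = ⋃ n : ℕ, Set.Iic (m - 1 / (n + 1)) := by
        ext t
        simp only [Set.mem_Iio, Set.mem_iUnion, Set.mem_Iic]
        constructor
        · intro h
          obtain ⟨n, hn⟩ := exists_nat_one_div_lt (show (0:ℝ) < m - t by linarith)
          exact ⟨n, by linarith⟩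
        · rintro ⟨n, hn⟩
          have : (0:ℝ) < 1 / (n + 1) := by positivity
          linarith
      have hmono : Monotone fun n : ℕ => Set.Iic (m - 1 / (n + 1)) := by
        intro i j hij
        apply Set.Iic_subset_Iic.2
        have : (1:ℝ) / (j + 1) ≤ 1 / (i + 1) := by
          apply one_div_le_one_div_of_le (by positivity)
          have hji : (i:ℝ) ≤ (j:ℝ) := Nat.cast_le.2 hij; linarith
        linarith
      rw [hunion, hmono.measure_iUnion]
      refine iSup_le fun n => ?_
      have hpos : (0:ℝ) < 1 / (n + 1) := by positivity
      have hnotS : m - 1 / (n + 1) ∉ S := fun hc =>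
        absurd (csInf_le hSbdd hc) (by rw [← hm]; push_neg; linarith)
      rw [hS, Set.mem_setOf_eq, not_le] at hnotS
      exact hnotS.le
    have hcompl : ν (Set.Ici m) = U - ν (Set.Iio m) := by
      have : Set.Ici m = (Set.Iio m)ᶜ := by simp
      rw [this, measure_compl measurableSet_Iio (measure_ne_top ν _)]
    rw [hcompl]
    calc U / 2 = U - U / 2 := (ENNReal.sub_half hUtop).symm
      _ ≤ U - ν (Set.Iio m) := tsub_le_tsub_left hIio U
  -- strict position
  have hma : a < m := by
    by_contra h
    push_neg at h
    have hIa : ν (Set.Iic a) = 0 := by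
      have heq : Set.Iic a = Set.Iio a ∪ {a} := by
        ext t; simp [le_iff_lt_or_eq]
      rw [heq]
      exact le_antisymm (le_trans (measure_union_le _ _) (by rw [ha, hatom]; simp))
        (by simp)
    exact hhalf0 (le_zero_iff.1 (hIic.trans
      ((measure_mono (Set.Iic_subset_Iic.2 h)).trans hIa.le)))
  have hmb : m < b := by
    rcases lt_or_ge m b with h | h
    · exact h
    · exfalso
      have hIb : ν (Set.Ici m) = 0 := by
        have hsub : Set.Ici m ⊆ {b} ∪ Set.Ioi b := by
          intro t ht
          simp only [Set.mem_union, Set.mem_singleton_iff, Set.mem_Ioi]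
          rcases eq_or_lt_of_le (le_trans h ht) with h' | h'
          · exact Or.inl h'.symm
          · exact Or.inr h'
        refine le_antisymm (le_trans (measure_mono hsub) ?_) (by simp)
        exact le_trans (measure_union_le _ _) (by rw [hatom, hb]; simp)
      exact hhalf0 (le_zero_iff.1 (hIci.trans_eq hIb))
  refine ⟨m, fun x hx => ?_⟩
  rcases lt_or_gt_of_ne hx with hlt | hgt
  · exact helper ν hint m x hlt hIci (hdense x m hlt hma (lt_trans hlt hmb))
  · -- x > m : reflect
    set ν' : Measure ℝ := Measure.map Neg.neg ν with hν'
    haveI : IsFiniteMeasure ν' := by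
      constructor
      rw [hν', Measure.map_apply measurable_neg MeasurableSet.univ]
      simpa using measure_lt_top ν _
    have hmap : ∀ (s : Set ℝ), MeasurableSet s → ν' s = ν (Neg.neg ⁻¹' s) := fun s hs =>
      Measure.map_apply measurable_neg hs
    have hint' : ∀ y : ℝ, Integrable (fun t => |y - t|) ν' := by
      intro y
      have hsm : AEStronglyMeasurable (fun t : ℝ => |y - t|) (Measure.map Neg.neg ν) :=
        ((continuous_const.sub continuous_id).abs).aestronglyMeasurable
      rw [hν', integrable_map_measure hsm measurable_neg.aemeasurable]
      have : (fun t => |y - t|) ∘ Neg.neg = fun t => |(-y) - t| := by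
        funext t; simp only [Function.comp_apply]
        rw [show y - (-t) = -((-y) - t) by ring, abs_neg]
      rw [this]; exact hint (-y)
    have huniv : ν' Set.univ = U := by
      rw [hmap _ MeasurableSet.univ]; simp [hU]
    have hIci' : ν' Set.univ / 2 ≤ ν' (Set.Ici (-m)) := by
      rw [huniv, hmap _ measurableSet_Ici]
      have : Neg.neg ⁻¹' Set.Ici (-m) = Set.Iic m := by
        ext t; simp [neg_le_neg_iff]
      rwa [this]
    have hIoo' : 0 < ν' (Set.Ioo (-x) (-m)) := by
      rw [hmap _ measurableSet_Ioo]
      have : Neg.neg ⁻¹' Set.Ioo (-x) (-m) = Set.Ioo m x := by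
        ext t; simp only [Set.mem_preimage, Set.mem_Ioo]; constructor <;> (intro h; constructor <;> linarith [h.1, h.2])
      rw [this]
      exact hdense m x hgt (lt_trans hma hgt) hmb
    have := helper ν' hint' (-m) (-x) (by linarith) hIci' hIoo'
    have htrans : ∀ c : ℝ, (∫ t, |(-c) - t| ∂ν') = ∫ t, |c - t| ∂ν := by
      intro c
      have hsm : AEStronglyMeasurable (fun t : ℝ => |(-c) - t|) (Measure.map Neg.neg ν) :=
        ((continuous_const.sub continuous_id).abs).aestronglyMeasurable
      rw [hν', integral_map measurable_neg.aemeasurable hsm]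
      congr 1
      funext t
      rw [show (-c) - (-t) = -(c - t) by ring, abs_neg]
    rwa [htrans m, htrans x] at this

open Set in
lemma marg (K : Set (ℝ × ℝ)) (hKne : K.Nonempty) (hKc : IsCompact K)
    (hKcl : K = closure (interior K)) (hConn : IsConnected K)
    (f : ℝ × ℝ → ℝ) (hf : Continuous f) (hopen : IsOpenMap f)
    (hfiber : ∀ t : ℝ, volume (f ⁻¹' ({t} : Set ℝ)) = 0) :
    ∃ m : ℝ, ∀ x : ℝ, x ≠ m →
      (∫ p in K, |m - f p|) < ∫ p in K, |x - f p| := by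
  have hKm : MeasurableSet K := hKc.measurableSet
  have hIntNe : (interior K).Nonempty := by
    by_contra h
    rw [not_nonempty_iff_eq_empty] at h
    rw [h, closure_empty] at hKcl
    exact hKne.ne_empty hKcl
  have hvolpos : 0 < volume K :=
    lt_of_lt_of_le (isOpen_interior.measure_pos volume hIntNe)
      (measure_mono interior_subset)
  have hvolfin : volume K ≠ ⊤ := hKc.measure_lt_top.ne
  set μK := volume.restrict K with hμK
  haveI : IsFiniteMeasure μK := ⟨by
    rw [hμK, Measure.restrict_apply_univ]; exact hvolfin.lt_top⟩
  set ν : Measure ℝ := Measure.map f μK with hν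
  haveI : IsFiniteMeasure ν := ⟨by
    rw [hν, Measure.map_apply hf.measurable MeasurableSet.univ]
    simp only [Set.preimage_univ]
    exact measure_lt_top μK _⟩
  have hmapapp : ∀ s : Set ℝ, MeasurableSet s → ν s = volume (f ⁻¹' s ∩ K) := by
    intro s hs
    rw [hν, Measure.map_apply hf.measurable hs, hμK, Measure.restrict_apply (hf.measurable hs)]
  have hι : ∀ x : ℝ, Integrable (fun p => |x - f p|) μK := fun x =>
    ContinuousOn.integrableOn_compact hKc ((continuous_const.sub hf).abs).continuousOn
  have hmapint : ∀ x : ℝ, (∫ t, |x - t| ∂ν) = ∫ p in K, |x - f p| := by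
    intro x
    have hsm : AEStronglyMeasurable (fun t : ℝ => |x - t|) ν :=
      ((continuous_const.sub continuous_id).abs).aestronglyMeasurable
    rw [hν, integral_map hf.measurable.aemeasurable hsm]
  have hint : ∀ x : ℝ, Integrable (fun t => |x - t|) ν := by
    intro x
    have hsm : AEStronglyMeasurable (fun t : ℝ => |x - t|) ν :=
      ((continuous_const.sub continuous_id).abs).aestronglyMeasurable
    rw [hν, integrable_map_measure hsm hf.measurable.aemeasurable]
    exact hι x
  have hν0 : ν ≠ 0 := by
    intro h
    have := hmapapp Set.univ MeasurableSet.univ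
    rw [h] at this
    simp only [Measure.coe_zero, Pi.zero_apply, Set.preimage_univ, Set.univ_inter] at this
    exact hvolpos.ne' this.symm
  have hatom : ∀ t : ℝ, ν {t} = 0 := by
    intro t
    rw [hmapapp _ (measurableSet_singleton t)]
    exact measure_mono_null Set.inter_subset_left (hfiber t)
  -- the projected interval
  set J := f '' K with hJ
  have hJc : IsCompact J := hKc.image hf
  have hJne : J.Nonempty := hKne.image f
  set a := sInf J with haa
  set b := sSup J with hbb
  have haJ : a ∈ J := hJc.sInf_mem hJne
  have hbJ : b ∈ J := hJc.sSup_mem hJne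
  have hJbdd : BddBelow J := hJc.bddBelow
  have hJbdd' : BddAbove J := hJc.bddAbove
  have hmemJ : ∀ p ∈ K, a ≤ f p ∧ f p ≤ b := fun p hp =>
    ⟨csInf_le hJbdd ⟨p, hp, rfl⟩, le_csSup hJbdd' ⟨p, hp, rfl⟩⟩
  have ha : ν (Set.Iio a) = 0 := by
    rw [hmapapp _ measurableSet_Iio]
    convert measure_empty (μ := volume)
    ext p
    simp only [Set.mem_inter_iff, Set.mem_preimage, Set.mem_Iio, Set.mem_empty_iff_false,
      iff_false, not_and]
    intro hlt hp
    exact absurd (hmemJ p hp).1 (not_le.2 hlt)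
  have hb : ν (Set.Ioi b) = 0 := by
    rw [hmapapp _ measurableSet_Ioi]
    convert measure_empty (μ := volume)
    ext p
    simp only [Set.mem_inter_iff, Set.mem_preimage, Set.mem_Ioi, Set.mem_empty_iff_false,
      iff_false, not_and]
    intro hlt hp
    exact absurd (hmemJ p hp).2 (not_le.2 hlt)
  -- a < b
  have hab : a < b := by
    obtain ⟨q, hq⟩ := hIntNe
    have hop : IsOpen (f '' interior K) := hopen _ isOpen_interior
    have hmem : f q ∈ f '' interior K := ⟨q, hq, rfl⟩
    obtain ⟨ε, hε, hball⟩ := Metric.isOpen_iff.1 hop _ hmem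
    have h1 : f q - ε / 2 ∈ J := by
      apply Set.image_mono interior_subset
      apply hball
      rw [Metric.mem_ball, Real.dist_eq, abs_of_nonpos (by linarith)]
      linarith
    have h2 : f q + ε / 2 ∈ J := by
      apply Set.image_mono interior_subset
      apply hball
      rw [Metric.mem_ball, Real.dist_eq, abs_of_nonneg (by linarith)]
      linarith
    calc a ≤ f q - ε / 2 := csInf_le hJbdd h1
      _ < f q + ε / 2 := by linarith
      _ ≤ b := le_csSup hJbdd' h2
  -- density
  have hJord : Set.OrdConnected J :=
    (IsConnected.image hConn f hf.continuousOn).isPreconnected.ordConnected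
  have hdense : ∀ u v : ℝ, u < v → a < v → u < b → 0 < ν (Set.Ioo u v) := by
    intro u v huv hav hub
    set w := (max u a + min v b) / 2 with hw
    have h1 : max u a < min v b := by
      rcases max_cases u a with ⟨h', _⟩ | ⟨h', _⟩ <;> rcases min_cases v b with ⟨h'', _⟩ | ⟨h'', _⟩ <;>
        rw [h', h''] <;> linarith
    have hwJ : w ∈ J := by
      apply hJord.out haJ hbJ
      constructor
      · have := le_max_right u a; rw [hw]
        have := min_le_right v b; linarith [le_max_right u a, min_le_right v b]
      · have := le_max_right u a; linarith [le_max_right u a, min_le_right v b]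
    have hwuv : u < w ∧ w < v := by
      constructor
      · linarith [le_max_left u a, h1]
      · linarith [min_le_left v b, h1]
    obtain ⟨p, hpK, hpw⟩ := hwJ
    have hpC : p ∈ closure (interior K) := by rw [← hKcl]; exact hpK
    have hVopen : IsOpen (f ⁻¹' Set.Ioo u v) := (isOpen_Ioo).preimage hf
    have hpV : p ∈ f ⁻¹' Set.Ioo u v := by
      simp only [Set.mem_preimage, Set.mem_Ioo, hpw]
      exact hwuv
    obtain ⟨q, hq⟩ := mem_closure_iff.1 hpC _ hVopen hpV
    have hU : IsOpen (f ⁻¹' Set.Ioo u v ∩ interior K) := hVopen.inter isOpen_interior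
    have hUne : (f ⁻¹' Set.Ioo u v ∩ interior K).Nonempty := ⟨q, hq.1, hq.2⟩
    rw [hmapapp _ measurableSet_Ioo]
    refine lt_of_lt_of_le (hU.measure_pos volume hUne) (measure_mono ?_)
    exact Set.inter_subset_inter (fun z hz => hz) interior_subset
  obtain ⟨m, hm⟩ := oned ν hν0 hint hatom a b hab ha hb hdense
  exact ⟨m, fun x hx => by
    rw [← hmapint m, ← hmapint x]; exact hm x hx⟩

open Set in
theorem stmt0 (K : Set (ℝ × ℝ)) (hKne : K.Nonempty) (hKc : IsCompact K)
    (hKcl : K = closure (interior K)) (hConn : IsConnected K)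
    (F : ℝ × ℝ → ℝ)
    (hF : ∀ z : ℝ × ℝ, F z =
      (volume K).toReal⁻¹ * ∫ p in K, (|z.1 - p.1| + |z.2 - p.2|)) :
    ∃ z : ℝ × ℝ, ∀ w : ℝ × ℝ, w ≠ z → F z < F w := by
  have hIntNe : (interior K).Nonempty := by
    by_contra h
    rw [not_nonempty_iff_eq_empty] at h
    rw [h, closure_empty] at hKcl
    exact hKne.ne_empty hKcl
  have hvolpos : 0 < volume K :=
    lt_of_lt_of_le (isOpen_interior.measure_pos volume hIntNe)
      (measure_mono interior_subset)
  have hvolfin : volume K ≠ ⊤ := hKc.measure_lt_top.ne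
  have hc : 0 < (volume K).toReal⁻¹ :=
    inv_pos.2 (ENNReal.toReal_pos hvolpos.ne' hvolfin)
  have hfib1 : ∀ t : ℝ, volume ((Prod.fst : ℝ × ℝ → ℝ) ⁻¹' ({t} : Set ℝ)) = 0 := by
    intro t
    have : (Prod.fst : ℝ × ℝ → ℝ) ⁻¹' ({t} : Set ℝ) = ({t} : Set ℝ) ×ˢ (Set.univ : Set ℝ) := by
      ext p
      simp only [Set.mem_preimage, Set.mem_singleton_iff, Set.mem_prod, Set.mem_univ,
        and_true, true_and]
    rw [this, Measure.volume_eq_prod, Measure.prod_prod]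
    simp
  have hfib2 : ∀ t : ℝ, volume ((Prod.snd : ℝ × ℝ → ℝ) ⁻¹' ({t} : Set ℝ)) = 0 := by
    intro t
    have : (Prod.snd : ℝ × ℝ → ℝ) ⁻¹' ({t} : Set ℝ) = (Set.univ : Set ℝ) ×ˢ ({t} : Set ℝ) := by
      ext p
      simp only [Set.mem_preimage, Set.mem_singleton_iff, Set.mem_prod, Set.mem_univ,
        and_true, true_and]
    rw [this, Measure.volume_eq_prod, Measure.prod_prod]
    simp
  obtain ⟨m₁, hm₁⟩ := marg K hKne hKc hKcl hConn Prod.fst continuous_fst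
    isOpenMap_fst hfib1
  obtain ⟨m₂, hm₂⟩ := marg K hKne hKc hKcl hConn Prod.snd continuous_snd
    isOpenMap_snd hfib2
  have hι : ∀ (x : ℝ) (f : ℝ × ℝ → ℝ), Continuous f →
      IntegrableOn (fun p => |x - f p|) K volume := fun x f hf =>
    ContinuousOn.integrableOn_compact hKc ((continuous_const.sub hf).abs).continuousOn
  have hsplit : ∀ z : ℝ × ℝ, (∫ p in K, (|z.1 - p.1| + |z.2 - p.2|)) =
      (∫ p in K, |z.1 - p.1|) + ∫ p in K, |z.2 - p.2| := fun z =>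
    integral_add (hι z.1 Prod.fst continuous_fst) (hι z.2 Prod.snd continuous_snd)
  refine ⟨(m₁, m₂), fun w hw => ?_⟩
  rw [hF w, hF (m₁, m₂)]
  apply mul_lt_mul_of_pos_left _ hc
  rw [hsplit w, hsplit (m₁, m₂)]
  simp only
  have h1 : (∫ p in K, |m₁ - p.1|) ≤ ∫ p in K, |w.1 - p.1| := by
    rcases eq_or_ne w.1 m₁ with h | h
    · rw [h]
    · exact (hm₁ w.1 h).le
  have h2 : (∫ p in K, |m₂ - p.2|) ≤ ∫ p in K, |w.2 - p.2| := by
    rcases eq_or_ne w.2 m₂ with h | h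
    · rw [h]
    · exact (hm₂ w.2 h).le
  have hne : w.1 ≠ m₁ ∨ w.2 ≠ m₂ := by
    by_contra h
    push_neg at h
    exact hw (Prod.ext h.1 h.2)
  rcases hne with h | h
  · linarith [hm₁ w.1 h]
  · linarith [hm₂ w.2 h]
end

section
/- Let μ be a finite nonzero measure on a compact body K ⊂ ℝ². The generalized conic function F_{K,μ} satisfies the growth condition liminf_{‖(x,y)‖→∞} F_{K,μ}(x,y)/√(x²+y²) ≥ μ(K) > 0. -/
open MeasureTheory Filter

theorem stmt2 (K : Set (ℝ × ℝ)) (hKne : K.Nonempty) (hKc : IsCompact K)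
    (hKcl : K = closure (interior K)) (μ : Measure (ℝ × ℝ))
    (hμ0 : 0 < μ K) (hμ : μ K < ⊤)
    (F : ℝ × ℝ → ℝ)
    (hF : ∀ z : ℝ × ℝ, F z = ∫ p in K, (|z.1 - p.1| + |z.2 - p.2|) ∂μ) :
    0 < (μ K).toReal ∧
      (μ K).toReal ≤
        liminf (fun z : ℝ × ℝ => F z / Real.sqrt (z.1 ^ 2 + z.2 ^ 2))
          (cocompact (ℝ × ℝ)) := by
  have hm : 0 < (μ K).toReal := ENNReal.toReal_pos hμ0.ne' hμ.ne
  refine ⟨hm, ?_⟩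
  set m := (μ K).toReal with hmdef
  have hcont : Continuous fun p : ℝ × ℝ => |p.1| + |p.2| :=
    (continuous_abs.comp continuous_fst).add (continuous_abs.comp continuous_snd)
  obtain ⟨C, hC0, hC⟩ : ∃ C : ℝ, 0 ≤ C ∧ ∀ p ∈ K, |p.1| + |p.2| ≤ C := by
    obtain ⟨p0, hp0, hmax⟩ := hKc.exists_isMaxOn hKne hcont.continuousOn
    exact ⟨|p0.1| + |p0.2|, by positivity, fun p hp => hmax hp⟩
  have hKm : MeasurableSet K := hKc.isClosed.measurableSet
  have hint : ∀ z : ℝ × ℝ,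
      IntegrableOn (fun p : ℝ × ℝ => |z.1 - p.1| + |z.2 - p.2|) K μ := by
    intro z
    have hcz : Continuous fun p : ℝ × ℝ => |z.1 - p.1| + |z.2 - p.2| :=
      ((continuous_const.sub continuous_fst).abs).add
        ((continuous_const.sub continuous_snd).abs)
    apply Measure.integrableOn_of_bounded (M := |z.1| + |z.2| + C) hμ.ne
      hcz.aestronglyMeasurable
    refine ae_restrict_of_forall_mem hKm fun p hp => ?_
    have h1 : |z.1 - p.1| ≤ |z.1| + |p.1| := abs_sub _ _
    have h2 : |z.2 - p.2| ≤ |z.2| + |p.2| := abs_sub _ _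
    have h3 := hC p hp
    rw [Real.norm_eq_abs, abs_of_nonneg (by positivity)]
    linarith
  set r : ℝ × ℝ → ℝ := fun z => Real.sqrt (z.1 ^ 2 + z.2 ^ 2) with hrdef
  have habs : ∀ z : ℝ × ℝ, |z.1| ≤ r z ∧ |z.2| ≤ r z := by
    intro z
    constructor
    · have := Real.sqrt_le_sqrt (show z.1 ^ 2 ≤ z.1 ^ 2 + z.2 ^ 2 by nlinarith)
      rwa [Real.sqrt_sq_eq_abs] at this
    · have := Real.sqrt_le_sqrt (show z.2 ^ 2 ≤ z.1 ^ 2 + z.2 ^ 2 by nlinarith)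
      rwa [Real.sqrt_sq_eq_abs] at this
  have hlow : ∀ z : ℝ × ℝ, (r z - C) * m ≤ F z := by
    intro z
    rw [hF]
    have hconst : (r z - C) * m = ∫ _ in K, (r z - C) ∂μ := by
      rw [setIntegral_const]; simp [hmdef, mul_comm, Measure.real]
    rw [hconst]
    refine setIntegral_mono_on (integrableOn_const hμ.ne) (hint z) hKm
      fun p hp => ?_
    have hs : r z ≤ |z.1| + |z.2| := by
      have h := Real.sqrt_le_sqrt (show z.1 ^ 2 + z.2 ^ 2 ≤ (|z.1| + |z.2|) ^ 2 by
        nlinarith [abs_nonneg z.1, abs_nonneg z.2, sq_abs z.1, sq_abs z.2])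
      rwa [Real.sqrt_sq (by positivity)] at h
    have h1 : |z.1| - |p.1| ≤ |z.1 - p.1| := abs_sub_abs_le_abs_sub _ _
    have h2 : |z.2| - |p.2| ≤ |z.2 - p.2| := abs_sub_abs_le_abs_sub _ _
    have h3 := hC p hp
    linarith
  have hhigh : ∀ z : ℝ × ℝ, F z ≤ (2 * r z + C) * m := by
    intro z
    rw [hF]
    have hconst : (2 * r z + C) * m = ∫ _ in K, (2 * r z + C) ∂μ := by
      rw [setIntegral_const]; simp [hmdef, mul_comm, Measure.real]
    rw [hconst]
    refine setIntegral_mono_on (hint z) (integrableOn_const hμ.ne) hKm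
      fun p hp => ?_
    have h1 : |z.1 - p.1| ≤ |z.1| + |p.1| := abs_sub _ _
    have h2 : |z.2 - p.2| ≤ |z.2| + |p.2| := abs_sub _ _
    have h3 := hC p hp
    obtain ⟨ha, hb⟩ := habs z
    linarith
  have hr : Tendsto r (cocompact (ℝ × ℝ)) atTop := by
    refine tendsto_atTop_mono ?_ tendsto_norm_cocompact_atTop
    intro z
    obtain ⟨h1, h2⟩ := habs z
    simp only [Prod.norm_def, Real.norm_eq_abs]
    exact max_le h1 h2
  have hg : Tendsto (fun z => m - C * m / r z) (cocompact (ℝ × ℝ)) (nhds m) := by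
    have h0 : Tendsto (fun z => C * m / r z) (cocompact (ℝ × ℝ)) (nhds 0) :=
      Tendsto.div_atTop tendsto_const_nhds hr
    simpa using tendsto_const_nhds.sub h0
  have hev : ∀ᶠ z in cocompact (ℝ × ℝ),
      m - C * m / r z ≤ F z / r z := by
    filter_upwards [hr.eventually_ge_atTop 1] with z hz
    have hz0 : (0:ℝ) < r z := lt_of_lt_of_le one_pos hz
    have h1 : (r z - C) * m / r z ≤ F z / r z :=
      div_le_div_of_nonneg_right (hlow z) hz0.le
    have h2 : (r z - C) * m / r z = m - C * m / r z := by
      field_simp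
    linarith
  have hcb : IsCoboundedUnder (· ≥ ·) (cocompact (ℝ × ℝ))
      (fun z : ℝ × ℝ => F z / r z) := by
    refine isCoboundedUnder_ge_of_eventually_le (x := 2 * m + C * m) _ ?_
    filter_upwards [hr.eventually_ge_atTop 1] with z hz
    have hz0 : (0:ℝ) < r z := lt_of_lt_of_le one_pos hz
    have h1 : F z / r z ≤ (2 * r z + C) * m / r z :=
      div_le_div_of_nonneg_right (hhigh z) hz0.le
    have h2 : (2 * r z + C) * m / r z = 2 * m + C * m / r z := by
      field_simp
    have h3 : C * m / r z ≤ C * m := by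
      rw [div_le_iff₀ hz0]
      nlinarith [mul_nonneg hC0 hm.le]
    linarith
  calc m = liminf (fun z => m - C * m / r z) (cocompact (ℝ × ℝ)) :=
        (hg.liminf_eq).symm
    _ ≤ liminf (fun z : ℝ × ℝ => F z / r z) (cocompact (ℝ × ℝ)) :=
        liminf_le_liminf hev hg.isBoundedUnder_ge hcb
end

section
/- Let μ be a finite measure on a compact body K ⊂ ℝ² giving zero measure to all vertical and horizontal lines. Then F_{K,μ} has partial derivatives at every point (x,y) ∈ ℝ² given by D₁F_{K,μ}(x,y) = μ({(α,β)∈K : α<x}) − μ({(α,β)∈K : x<α}) and D₂F_{K,μ}(x,y) = μ({(α,β)∈K : β<y}) − μ({(α,β)∈K : y<β}). -/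
open MeasureTheory

lemma int_compact {f : ℝ × ℝ → ℝ} (hf : Continuous f) {K : Set (ℝ × ℝ)}
    (hK : IsCompact K) (μ : Measure (ℝ × ℝ)) (hμ : μ K < ⊤) :
    Integrable f (μ.restrict K) := by
  haveI : IsFiniteMeasure (μ.restrict K) :=
    ⟨by rwa [Measure.restrict_apply_univ]⟩
  obtain ⟨C, hC⟩ := hK.exists_bound_of_continuousOn hf.continuousOn
  refine Integrable.mono' (integrable_const C) hf.aestronglyMeasurable ?_
  filter_upwards [ae_restrict_mem hK.measurableSet] with p hp
  exact hC p hp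

lemma aux_deriv (ν : Measure (ℝ × ℝ)) [IsFiniteMeasure ν] (π g : ℝ × ℝ → ℝ)
    (hπ : Continuous π) (hg : Continuous g) (x₀ : ℝ)
    (hb : Integrable (fun p => |x₀ - π p|) ν) (hgb : Integrable g ν)
    (h0 : ν {p | π p = x₀} = 0) :
    HasDerivAt (fun t => ∫ p, (|t - π p| + g p) ∂ν)
      ((ν {p | π p < x₀}).toReal - (ν {p | x₀ < π p}).toReal) x₀ := by
  set S : Set (ℝ × ℝ) := {p | π p < x₀} with hSdef
  set T : Set (ℝ × ℝ) := {p | x₀ < π p} with hTdef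
  have hS : MeasurableSet S := hπ.measurable measurableSet_Iio
  have hT : MeasurableSet T := hπ.measurable measurableSet_Ioi
  set F' : ℝ × ℝ → ℝ := fun p => S.indicator (fun _ => (1:ℝ)) p - T.indicator (fun _ => (1:ℝ)) p
    with hF'def
  have key := hasDerivAt_integral_of_dominated_loc_of_lip
    (F := fun t p => |t - π p| + g p) (F' := F') (μ := ν) (bound := fun _ => (1:ℝ))
    (x₀ := x₀) (Metric.ball_mem_nhds x₀ one_pos)
    (Filter.Eventually.of_forall fun x =>
      ((continuous_const.sub hπ).abs.add hg).aestronglyMeasurable)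
    (hb.add hgb)
    (((measurable_const.indicator hS).sub (measurable_const.indicator hT)).aestronglyMeasurable)
    (Filter.Eventually.of_forall fun p => by
      have hlip : LipschitzWith 1 (fun x : ℝ => |x - π p| + g p) := by
        refine LipschitzWith.of_dist_le_mul fun x y => ?_
        simp only [Real.dist_eq, add_sub_add_right_eq_sub, NNReal.coe_one, one_mul]
        calc |(|x - π p| - |y - π p|)| ≤ |x - π p - (y - π p)| := abs_abs_sub_abs_le_abs_sub _ _
        _ = |x - y| := by rw [sub_sub_sub_cancel_right]
      have hone : Real.nnabs (1:ℝ) = 1 := by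
        ext; simp
      rw [hone]
      exact hlip.lipschitzOnWith)
    (integrable_const 1)
    (by
      have hae : ∀ᵐ p ∂ν, π p ≠ x₀ := by
        rw [ae_iff]; simpa using h0
      filter_upwards [hae] with p hp
      rcases lt_or_gt_of_ne hp with h | h
      · -- π p < x₀ : derivative 1
        have hval : F' p = 1 := by
          simp [hF'def, Set.indicator_apply, hSdef, hTdef, h, not_lt.mpr h.le]
        rw [hval]
        have hd : HasDerivAt (fun x => x - π p + g p) 1 x₀ := by
          simpa using ((hasDerivAt_id x₀).sub_const (π p)).add_const (g p)
        refine hd.congr_of_eventuallyEq ?_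
        filter_upwards [Ioi_mem_nhds h] with x hx
        rw [abs_of_pos (sub_pos.mpr hx)]
      · -- x₀ < π p : derivative -1
        have hval : F' p = -1 := by
          simp [hF'def, Set.indicator_apply, hSdef, hTdef, h, not_lt.mpr h.le]
        rw [hval]
        have hd : HasDerivAt (fun x => π p - x + g p) (-1) x₀ := by
          simpa using ((hasDerivAt_id x₀).const_sub (π p)).add_const (g p)
        refine hd.congr_of_eventuallyEq ?_
        filter_upwards [Iio_mem_nhds h] with x hx
        rw [abs_of_neg (sub_neg.mpr hx)]
        ring)
  have hint := key.2
  have : ∫ p, F' p ∂ν = (ν S).toReal - (ν T).toReal := by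
    rw [hF'def]
    rw [integral_sub ((integrable_const (1:ℝ)).indicator hS)
        ((integrable_const (1:ℝ)).indicator hT)]
    rw [show (fun _ : ℝ × ℝ => (1:ℝ)) = (1 : (ℝ × ℝ) → ℝ) from rfl,
      integral_indicator_one hS, integral_indicator_one hT]
    rfl
  rwa [this] at hint

theorem stmt5 (K : Set (ℝ × ℝ)) (hKne : K.Nonempty) (hKc : IsCompact K)
    (hKcl : K = closure (interior K)) (μ : Measure (ℝ × ℝ)) (hμ : μ K < ⊤)
    (hC3 : ∀ x : ℝ, μ {p ∈ K | p.1 = x} = 0 ∧ μ {p ∈ K | p.2 = x} = 0)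
    (F : ℝ × ℝ → ℝ)
    (hF : ∀ z : ℝ × ℝ, F z = ∫ p in K, (|z.1 - p.1| + |z.2 - p.2|) ∂μ) :
    ∀ z : ℝ × ℝ,
      HasDerivAt (fun t => F (t, z.2))
        ((μ {p ∈ K | p.1 < z.1}).toReal - (μ {p ∈ K | z.1 < p.1}).toReal) z.1 ∧
      HasDerivAt (fun t => F (z.1, t))
        ((μ {p ∈ K | p.2 < z.2}).toReal - (μ {p ∈ K | z.2 < p.2}).toReal) z.2 := by
  intro z
  set ν := μ.restrict K with hν
  haveI : IsFiniteMeasure ν := ⟨by rw [hν, Measure.restrict_apply_univ]; exact hμ⟩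
  have hKm : MeasurableSet K := hKc.measurableSet
  have hmeas : ∀ (q : ℝ × ℝ → ℝ) (hq : Measurable q) (s : Set ℝ) (hs : MeasurableSet s),
      ν {p | q p ∈ s} = μ {p ∈ K | q p ∈ s} := by
    intro q hq s hs
    have hpre : {p : ℝ × ℝ | q p ∈ s} = q ⁻¹' s := rfl
    rw [hν, hpre, Measure.restrict_apply (hq hs)]
    congr 1
    ext p
    simp [Set.mem_setOf_eq, and_comm]
  constructor
  · have h1 : (fun t => F (t, z.2)) = fun t => ∫ p, (|t - p.1| + |z.2 - p.2|) ∂ν := by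
      funext t; exact hF (t, z.2)
    rw [h1]
    have hd := aux_deriv ν Prod.fst (fun p => |z.2 - p.2|) continuous_fst
      (continuous_const.sub continuous_snd).abs z.1
      (int_compact (continuous_const.sub continuous_fst).abs hKc μ hμ)
      (int_compact (continuous_const.sub continuous_snd).abs hKc μ hμ)
      (by
        have := hmeas Prod.fst measurable_fst {z.1} (measurableSet_singleton _)
        simp only [Set.mem_singleton_iff] at this
        rw [this]; exact (hC3 z.1).1)
    have e1 := hmeas Prod.fst measurable_fst (Set.Iio z.1) measurableSet_Iio
    have e2 := hmeas Prod.fst measurable_fst (Set.Ioi z.1) measurableSet_Ioi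
    simp only [Set.mem_Iio, Set.mem_Ioi] at e1 e2
    rwa [e1, e2] at hd
  · have h1 : (fun t => F (z.1, t)) = fun t => ∫ p, (|t - p.2| + |z.1 - p.1|) ∂ν := by
      funext t
      rw [hF (z.1, t)]
      exact integral_congr_ae (Filter.Eventually.of_forall fun p => by simp [add_comm])
    rw [h1]
    have hd := aux_deriv ν Prod.snd (fun p => |z.1 - p.1|) continuous_snd
      (continuous_const.sub continuous_fst).abs z.2
      (int_compact (continuous_const.sub continuous_snd).abs hKc μ hμ)
      (int_compact (continuous_const.sub continuous_fst).abs hKc μ hμ)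
      (by
        have := hmeas Prod.snd measurable_snd {z.2} (measurableSet_singleton _)
        simp only [Set.mem_singleton_iff] at this
        rw [this]; exact (hC3 z.2).2)
    have e1 := hmeas Prod.snd measurable_snd (Set.Iio z.2) measurableSet_Iio
    have e2 := hmeas Prod.snd measurable_snd (Set.Ioi z.2) measurableSet_Ioi
    simp only [Set.mem_Iio, Set.mem_Ioi] at e1 e2
    rwa [e1, e2] at hd
end

section
/- Let K ⊂ ℝ² be a connected compact body and μ a finite measure on K such that μ(B(p,ε) ∩ K) > 0 for every p ∈ K and ε > 0, and μ gives zero measure to all vertical and horizontal lines. Then F_{K,μ} has a unique global minimizer (x*,y*) ∈ ℝ², and F_{K,μ}(x,y) > F_{K,μ}(x*,y*) for all (x,y) ≠ (x*,y*). -/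
open MeasureTheory

section StmtAux

variable {Ω : Type*} [MeasurableSpace Ω]

lemma int_abs_aux (ν : Measure Ω) [IsFiniteMeasure ν] {T : Ω → ℝ} (hT : Measurable T)
    (a b : ℝ) (hsupp : ν {ω | T ω ∉ Set.Icc a b} = 0) (y : ℝ) :
    Integrable (fun ω => |y - T ω|) ν := by
  have haein : ∀ᵐ ω ∂ν, T ω ∈ Set.Icc a b := by
    rw [MeasureTheory.ae_iff]; exact hsupp
  refine (integrable_const (|y| + |a| + |b|)).mono'
    ((hT.const_sub y).abs).aestronglyMeasurable ?_
  filter_upwards [haein] with ω hω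
  rw [Real.norm_eq_abs, abs_abs]
  rcases hω with ⟨h1, h2⟩
  rw [abs_le]
  constructor <;>
    [skip; skip] <;>
    cases' abs_cases y with hy hy <;>
    cases' abs_cases a with haa haa <;>
    cases' abs_cases b with hbb hbb <;>
    cases' abs_cases (y - T ω) with hc hc <;> linarith


lemma onesided_aux (ν : Measure Ω) [IsFiniteMeasure ν] {T : Ω → ℝ} (hT : Measurable T)
    (hpos : 0 < ν Set.univ)
    (hint : ∀ y : ℝ, Integrable (fun ω => |y - T ω|) ν)
    (m x : ℝ) (hmx : m < x)
    (hA : ν {ω | m < T ω} ≤ ν {ω | T ω ≤ m})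
    (hcase : ν {ω | m < T ω} = 0 ∨ 0 < ν {ω | m < T ω ∧ T ω < x}) :
    ∫ ω, |m - T ω| ∂ν < ∫ ω, |x - T ω| ∂ν := by
  have hφint : Integrable (fun ω => |x - T ω| - |m - T ω|) ν := (hint x).sub (hint m)
  have key : 0 < ∫ ω, (|x - T ω| - |m - T ω|) ∂ν := by
    rcases hcase with h0 | hIoo
    · have hae : ∀ᵐ ω ∂ν, ¬ (m < T ω) := by
        rw [MeasureTheory.ae_iff]; simpa using h0
      have heq : ∫ ω, (|x - T ω| - |m - T ω|) ∂ν = ∫ _ω, (x - m) ∂ν := by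
        refine integral_congr_ae ?_
        filter_upwards [hae] with ω h
        push_neg at h
        rw [abs_of_nonneg (by linarith), abs_of_nonneg (by linarith)]
        ring
      rw [heq, integral_const, smul_eq_mul, measureReal_def]
      have h1 : 0 < (ν Set.univ).toReal := ENNReal.toReal_pos hpos.ne' (measure_ne_top ν _)
      nlinarith
    · set S := {ω | T ω ≤ m} with hS
      have hSm : MeasurableSet S := hT measurableSet_Iic
      have hSc : Sᶜ = {ω | m < T ω} := by ext ω; simp [S, not_le]
      set ψ : Ω → ℝ := fun ω => if T ω ≤ m then x - m else -(x - m) with hψdef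
      have hψmeas : Measurable ψ := Measurable.ite hSm measurable_const measurable_const
      have hψint : Integrable ψ ν := by
        refine (integrable_const (x - m)).mono' hψmeas.aestronglyMeasurable ?_
        filter_upwards with ω
        by_cases h : T ω ≤ m
        · rw [hψdef]; simp only [if_pos h, Real.norm_eq_abs]
          rw [abs_of_pos (by linarith)]
        · rw [hψdef]; simp only [if_neg h, Real.norm_eq_abs, abs_neg]
          rw [abs_of_pos (by linarith)]
      have hle : ∀ ω, ψ ω ≤ |x - T ω| - |m - T ω| := by
        intro ω
        by_cases h : T ω ≤ m
        · rw [hψdef]; simp only [if_pos h]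
          rw [abs_of_nonneg (by linarith : (0:ℝ) ≤ x - T ω),
            abs_of_nonneg (by linarith : (0:ℝ) ≤ m - T ω)]
          linarith
        · rw [hψdef]; simp only [if_neg h]
          have h2 : |m - T ω| - |x - T ω| ≤ |m - x| := by
            calc |m - T ω| - |x - T ω| ≤ |(m - T ω) - (x - T ω)| := abs_sub_abs_le_abs_sub _ _
              _ = |m - x| := by ring_nf
          have h3 : |m - x| = x - m := by
            rw [abs_sub_comm, abs_of_pos (by linarith)]
          linarith
      have hψval : ∫ ω, ψ ω ∂ν
          = (ν S).toReal * (x - m) - (ν Sᶜ).toReal * (x - m) := by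
        rw [← integral_add_compl hSm hψint]
        have e1 : ∫ ω in S, ψ ω ∂ν = (ν S).toReal * (x - m) := by
          have h' := setIntegral_congr_fun (f := ψ) (g := fun _ => x - m) (μ := ν) hSm
            (fun ω hω => if_pos hω)
          rw [h', setIntegral_const, smul_eq_mul, measureReal_def]
        have e2 : ∫ ω in Sᶜ, ψ ω ∂ν = -((ν Sᶜ).toReal * (x - m)) := by
          have h' := setIntegral_congr_fun (f := ψ) (g := fun _ => -(x - m)) (μ := ν) hSm.compl
            (fun ω hω => if_neg hω)
          rw [h', setIntegral_const, smul_eq_mul, measureReal_def]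
          ring
        rw [e1, e2]; ring
      have hψ0 : 0 ≤ ∫ ω, ψ ω ∂ν := by
        rw [hψval]
        have hc : (ν Sᶜ).toReal ≤ (ν S).toReal := by
          apply ENNReal.toReal_mono (measure_ne_top ν S)
          rw [hSc]; exact hA
        nlinarith
      have hdiffpos : 0 < ∫ ω, ((|x - T ω| - |m - T ω|) - ψ ω) ∂ν := by
        rw [integral_pos_iff_support_of_nonneg (fun ω => sub_nonneg.mpr (hle ω))
          (hφint.sub hψint)]
        refine hIoo.trans_le (measure_mono ?_)
        rintro ω ⟨h1, h2⟩
        simp only [Function.mem_support]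
        have hψω : ψ ω = -(x - m) := by rw [hψdef]; exact if_neg (not_le.mpr h1)
        have e1 : |x - T ω| = x - T ω := abs_of_nonneg (by linarith)
        have e2 : |m - T ω| = T ω - m := by
          rw [abs_sub_comm]; exact abs_of_nonneg (by linarith)
        rw [hψω, e1, e2]
        have : (0:ℝ) < x - T ω - (T ω - m) - -(x - m) := by linarith
        exact this.ne'
      rw [integral_sub hφint hψint] at hdiffpos
      linarith
  rw [integral_sub (hint x) (hint m)] at key
  linarith

lemma median_facts (ν : Measure Ω) [IsFiniteMeasure ν] {T : Ω → ℝ} (hT : Measurable T)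
    (hpos : 0 < ν Set.univ)
    (a b : ℝ) (hsupp : ν {ω | T ω ∉ Set.Icc a b} = 0) :
    ∃ m : ℝ, a ≤ m ∧ m ≤ b ∧ ν {ω | m < T ω} ≤ ν {ω | T ω ≤ m} ∧
      ν {ω | T ω < m} ≤ ν {ω | m ≤ T ω} := by
  set s : Set ℝ := {x | ν {ω | x < T ω} ≤ ν {ω | T ω ≤ x}} with hs
  have hbmem : b ∈ s := by
    have h0 : ν {ω | b < T ω} = 0 := by
      refine measure_mono_null ?_ hsupp
      intro ω hω
      simp only [Set.mem_setOf_eq, Set.mem_Icc, not_and, not_le] at *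
      intro _; exact hω
    show ν {ω | b < T ω} ≤ ν {ω | T ω ≤ b}
    rw [h0]; exact zero_le
  have hlow : ∀ y ∈ s, a ≤ y := by
    intro y hy
    by_contra hya
    push_neg at hya
    have h1 : ν {ω | T ω ≤ y} = 0 := by
      refine measure_mono_null ?_ hsupp
      intro ω hω
      simp only [Set.mem_setOf_eq, Set.mem_Icc, not_and, not_le] at *
      intro h; linarith
    have hy' : ν {ω | y < T ω} ≤ ν {ω | T ω ≤ y} := hy
    have h2 : ν Set.univ ≤ ν {ω | y < T ω} + ν {ω | T ω ≤ y} := by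
      calc ν Set.univ = ν ({ω | y < T ω} ∪ {ω | T ω ≤ y}) := by
            congr 1; ext ω; simp [lt_or_ge]
        _ ≤ _ := measure_union_le _ _
    rw [h1, add_zero] at h2
    rw [h1] at hy'
    exact absurd (le_trans h2 hy') (by simpa using hpos.ne')
  have hsne : s.Nonempty := ⟨b, hbmem⟩
  have hbdd : BddBelow s := ⟨a, hlow⟩
  set m := sInf s with hm
  have ham : a ≤ m := le_csInf hsne hlow
  have hmb : m ≤ b := csInf_le hbdd hbmem
  have hmono : ∀ {u v : ℝ}, u ∈ s → u ≤ v → v ∈ s := by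
    intro u v hu huv
    show ν {ω | v < T ω} ≤ ν {ω | T ω ≤ v}
    calc ν {ω | v < T ω} ≤ ν {ω | u < T ω} :=
          measure_mono (fun ω h => lt_of_le_of_lt huv h)
      _ ≤ ν {ω | T ω ≤ u} := hu
      _ ≤ ν {ω | T ω ≤ v} := measure_mono (fun ω h => le_trans h huv)
  have hinv : ∀ {i j : ℕ}, i ≤ j → ((j:ℝ)+1)⁻¹ ≤ ((i:ℝ)+1)⁻¹ := by
    intro i j hij
    have h1 : ((i:ℝ)+1) ≤ ((j:ℝ)+1) := by
      have : (i:ℝ) ≤ (j:ℝ) := by exact_mod_cast hij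
      linarith
    exact inv_anti₀ (by positivity) h1
  refine ⟨m, ham, hmb, ?_, ?_⟩
  · -- fact A
    have hmem : ∀ n : ℕ, m + ((n:ℝ)+1)⁻¹ ∈ s := by
      intro n
      have hpos' : (0:ℝ) < ((n:ℝ)+1)⁻¹ := by positivity
      obtain ⟨y, hy, hy2⟩ := exists_lt_of_csInf_lt hsne
        (show sInf s < m + ((n:ℝ)+1)⁻¹ by rw [← hm]; linarith)
      exact hmono hy hy2.le
    have hU : {ω | m < T ω} = ⋃ n : ℕ, {ω | m + ((n:ℝ)+1)⁻¹ < T ω} := by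
      ext ω
      simp only [Set.mem_setOf_eq, Set.mem_iUnion]
      constructor
      · intro h
        obtain ⟨n, hn⟩ := exists_nat_one_div_lt (sub_pos.mpr h)
        rw [one_div] at hn
        exact ⟨n, by linarith⟩
      · rintro ⟨n, hn⟩
        have : (0:ℝ) < ((n:ℝ)+1)⁻¹ := by positivity
        linarith
    have hI : {ω | T ω ≤ m} = ⋂ n : ℕ, {ω | T ω ≤ m + ((n:ℝ)+1)⁻¹} := by
      ext ω
      simp only [Set.mem_setOf_eq, Set.mem_iInter]
      constructor
      · intro h n
        have : (0:ℝ) < ((n:ℝ)+1)⁻¹ := by positivity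
        linarith
      · intro h
        by_contra hc
        push_neg at hc
        obtain ⟨n, hn⟩ := exists_nat_one_div_lt (sub_pos.mpr hc)
        rw [one_div] at hn
        have := h n
        linarith
    have hUm : Monotone (fun n : ℕ => {ω | m + ((n:ℝ)+1)⁻¹ < T ω}) := by
      intro i j hij ω hω
      have h2 : ((j:ℝ)+1)⁻¹ ≤ ((i:ℝ)+1)⁻¹ := hinv hij
      have hω' : m + ((i:ℝ)+1)⁻¹ < T ω := hω
      show m + ((j:ℝ)+1)⁻¹ < T ω
      linarith
    have hIm : Antitone (fun n : ℕ => {ω | T ω ≤ m + ((n:ℝ)+1)⁻¹}) := by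
      intro i j hij ω hω
      have h2 : ((j:ℝ)+1)⁻¹ ≤ ((i:ℝ)+1)⁻¹ := hinv hij
      have hω' : T ω ≤ m + ((j:ℝ)+1)⁻¹ := hω
      show T ω ≤ m + ((i:ℝ)+1)⁻¹
      linarith
    rw [hU, hI, hUm.measure_iUnion,
      hIm.measure_iInter (fun n => (hT measurableSet_Iic).nullMeasurableSet)
        ⟨0, measure_ne_top ν _⟩]
    refine iSup_le fun n => le_iInf fun k => ?_
    obtain ⟨j, hj1, hj2⟩ : ∃ j : ℕ, n ≤ j ∧ k ≤ j := ⟨max n k, le_max_left n k, le_max_right n k⟩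
    calc ν {ω | m + ((n:ℝ)+1)⁻¹ < T ω}
        ≤ ν {ω | m + ((j:ℝ)+1)⁻¹ < T ω} := measure_mono (hUm hj1)
      _ ≤ ν {ω | T ω ≤ m + ((j:ℝ)+1)⁻¹} := hmem j
      _ ≤ ν {ω | T ω ≤ m + ((k:ℝ)+1)⁻¹} := measure_mono (hIm hj2)
  · -- fact B
    have hnmem : ∀ n : ℕ,
        ν {ω | T ω ≤ m - ((n:ℝ)+1)⁻¹} ≤ ν {ω | m - ((n:ℝ)+1)⁻¹ < T ω} := by
      intro n
      have hpos' : (0:ℝ) < ((n:ℝ)+1)⁻¹ := by positivity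
      have hns : m - ((n:ℝ)+1)⁻¹ ∉ s := by
        intro hc
        have := csInf_le hbdd hc
        rw [← hm] at this
        linarith
      exact (not_le.mp hns).le
    have hU : {ω | T ω < m} = ⋃ n : ℕ, {ω | T ω ≤ m - ((n:ℝ)+1)⁻¹} := by
      ext ω
      simp only [Set.mem_setOf_eq, Set.mem_iUnion]
      constructor
      · intro h
        obtain ⟨n, hn⟩ := exists_nat_one_div_lt (sub_pos.mpr h)
        rw [one_div] at hn
        exact ⟨n, by linarith⟩
      · rintro ⟨n, hn⟩
        have : (0:ℝ) < ((n:ℝ)+1)⁻¹ := by positivity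
        linarith
    have hI : {ω | m ≤ T ω} = ⋂ n : ℕ, {ω | m - ((n:ℝ)+1)⁻¹ < T ω} := by
      ext ω
      simp only [Set.mem_setOf_eq, Set.mem_iInter]
      constructor
      · intro h n
        have : (0:ℝ) < ((n:ℝ)+1)⁻¹ := by positivity
        linarith
      · intro h
        by_contra hc
        push_neg at hc
        obtain ⟨n, hn⟩ := exists_nat_one_div_lt (sub_pos.mpr hc)
        rw [one_div] at hn
        have := h n
        linarith
    have hUm : Monotone (fun n : ℕ => {ω | T ω ≤ m - ((n:ℝ)+1)⁻¹}) := by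
      intro i j hij ω hω
      have h2 : ((j:ℝ)+1)⁻¹ ≤ ((i:ℝ)+1)⁻¹ := hinv hij
      have hω' : T ω ≤ m - ((i:ℝ)+1)⁻¹ := hω
      show T ω ≤ m - ((j:ℝ)+1)⁻¹
      linarith
    have hIm : Antitone (fun n : ℕ => {ω | m - ((n:ℝ)+1)⁻¹ < T ω}) := by
      intro i j hij ω hω
      have h2 : ((j:ℝ)+1)⁻¹ ≤ ((i:ℝ)+1)⁻¹ := hinv hij
      have hω' : m - ((j:ℝ)+1)⁻¹ < T ω := hω
      show m - ((i:ℝ)+1)⁻¹ < T ω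
      linarith
    rw [hU, hI, hUm.measure_iUnion,
      hIm.measure_iInter (fun n => (hT measurableSet_Ioi).nullMeasurableSet)
        ⟨0, measure_ne_top ν _⟩]
    refine iSup_le fun n => le_iInf fun k => ?_
    obtain ⟨j, hj1, hj2⟩ : ∃ j : ℕ, n ≤ j ∧ k ≤ j := ⟨max n k, le_max_left n k, le_max_right n k⟩
    calc ν {ω | T ω ≤ m - ((n:ℝ)+1)⁻¹}
        ≤ ν {ω | T ω ≤ m - ((j:ℝ)+1)⁻¹} := measure_mono (hUm hj1)
      _ ≤ ν {ω | m - ((j:ℝ)+1)⁻¹ < T ω} := hnmem j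
      _ ≤ ν {ω | m - ((k:ℝ)+1)⁻¹ < T ω} := measure_mono (hIm hj2)

lemma core_aux (ν : Measure Ω) [IsFiniteMeasure ν] {T : Ω → ℝ} (hT : Measurable T)
    (hpos : 0 < ν Set.univ)
    (a b : ℝ) (hsupp : ν {ω | T ω ∉ Set.Icc a b} = 0)
    (hball : ∀ x ∈ Set.Icc a b, ∀ ε > (0:ℝ), 0 < ν {ω | x - ε < T ω ∧ T ω < x + ε}) :
    ∃ m : ℝ, ∀ x : ℝ, x ≠ m → ∫ ω, |m - T ω| ∂ν < ∫ ω, |x - T ω| ∂ν := by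
  obtain ⟨m, ham, hmb, hA, hB⟩ := median_facts ν hT hpos a b hsupp
  have hint : ∀ y : ℝ, Integrable (fun ω => |y - T ω|) ν := int_abs_aux ν hT a b hsupp
  refine ⟨m, fun x hx => ?_⟩
  rcases hx.lt_or_gt with hxm | hmx
  · -- x < m : reflection
    have hint' : ∀ y : ℝ, Integrable (fun ω => |y - (-T ω)|) ν := by
      intro y
      have h := hint (-y)
      have he : (fun ω => |(-y) - T ω|) = (fun ω => |y - (-T ω)|) := by
        funext ω
        rw [show y - (-T ω) = -((-y) - T ω) by ring, abs_neg]
      rwa [he] at h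
    have e1 : {ω | -m < -T ω} = {ω | T ω < m} := by ext ω; simp
    have e2 : {ω | -T ω ≤ -m} = {ω | m ≤ T ω} := by ext ω; simp
    have hA' : ν {ω | -m < -T ω} ≤ ν {ω | -T ω ≤ -m} := by rw [e1, e2]; exact hB
    have hcase' : ν {ω | -m < -T ω} = 0 ∨ 0 < ν {ω | -m < -T ω ∧ -T ω < -x} := by
      by_cases h0 : ν {ω | T ω < m} = 0
      · left; rw [e1]; exact h0
      · right
        have ham' : a < m := by
          rcases lt_or_eq_of_le ham with h | h
          · exact h
          · exfalso; apply h0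
            refine measure_mono_null ?_ hsupp
            intro ω hω
            simp only [Set.mem_setOf_eq, Set.mem_Icc, not_and, not_le] at *
            intro h2; subst h; linarith
        set c := (max x a + m) / 2 with hc
        have hxam : max x a < m := max_lt hxm ham'
        have hc1 : max x a < c := by rw [hc]; linarith
        have hc2 : c < m := by rw [hc]; linarith
        set ε := min (c - max x a) (m - c) with hε
        have hεpos : 0 < ε := lt_min (by linarith) (by linarith)
        have hcIcc : c ∈ Set.Icc a b :=
          ⟨le_trans (le_max_right x a) hc1.le, le_trans hc2.le hmb⟩
        have hb := hball c hcIcc ε hεpos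
        have hsub : {ω | c - ε < T ω ∧ T ω < c + ε} ⊆ {ω | -m < -T ω ∧ -T ω < -x} := by
          rintro ω ⟨h1, h2⟩
          have hm1 := min_le_left (c - max x a) (m - c)
          have hm2 := min_le_right (c - max x a) (m - c)
          have hxa := le_max_left x a
          constructor
          · show -m < -T ω
            have : T ω < m := by linarith
            linarith
          · show -T ω < -x
            have : x < T ω := by linarith
            linarith
        exact hb.trans_le (measure_mono hsub)
    have hres := onesided_aux ν hT.neg hpos hint' (-m) (-x) (by linarith) hA' hcase'
    simpa [neg_sub_neg, neg_add_eq_sub, abs_sub_comm] using hres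
  · -- m < x
    have hcase : ν {ω | m < T ω} = 0 ∨ 0 < ν {ω | m < T ω ∧ T ω < x} := by
      by_cases h0 : ν {ω | m < T ω} = 0
      · exact Or.inl h0
      · right
        have hmb' : m < b := by
          rcases lt_or_eq_of_le hmb with h | h
          · exact h
          · exfalso; apply h0
            refine measure_mono_null ?_ hsupp
            intro ω hω
            simp only [Set.mem_setOf_eq, Set.mem_Icc, not_and, not_le] at *
            intro _; rw [h] at hω; exact hω
        set c := (m + min x b) / 2 with hc
        have hminxb : m < min x b := lt_min hmx hmb'
        have hc1 : m < c := by rw [hc]; linarith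
        have hc2 : c < min x b := by rw [hc]; linarith
        set ε := min (c - m) (min x b - c) with hε
        have hεpos : 0 < ε := lt_min (by linarith) (by linarith)
        have hcIcc : c ∈ Set.Icc a b :=
          ⟨le_trans ham hc1.le, le_trans hc2.le (min_le_right x b)⟩
        have hb := hball c hcIcc ε hεpos
        have hsub : {ω | c - ε < T ω ∧ T ω < c + ε} ⊆ {ω | m < T ω ∧ T ω < x} := by
          rintro ω ⟨h1, h2⟩
          have hm1 := min_le_left (c - m) (min x b - c)
          have hm2 := min_le_right (c - m) (min x b - c)
          have hxb := min_le_left x b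
          exact ⟨by show m < T ω; linarith, by show T ω < x; linarith⟩
        exact hb.trans_le (measure_mono hsub)
    exact onesided_aux ν hT hpos hint m x hmx hA hcase

end StmtAux

theorem stmt7 (K : Set (ℝ × ℝ)) (hKne : K.Nonempty) (hKc : IsCompact K)
    (hKcl : K = closure (interior K)) (hConn : IsConnected K)
    (μ : Measure (ℝ × ℝ)) (hμ : μ K < ⊤)
    (hC2 : ∀ p ∈ K, ∀ ε > (0:ℝ), 0 < μ (Metric.ball p ε ∩ K))
    (hC3 : ∀ x : ℝ, μ {p ∈ K | p.1 = x} = 0 ∧ μ {p ∈ K | p.2 = x} = 0)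
    (F : ℝ × ℝ → ℝ)
    (hF : ∀ z : ℝ × ℝ, F z = ∫ p in K, (|z.1 - p.1| + |z.2 - p.2|) ∂μ) :
    ∃ z : ℝ × ℝ, ∀ w : ℝ × ℝ, w ≠ z → F z < F w := by
  have hKm : MeasurableSet K := hKc.isClosed.measurableSet
  set ν := μ.restrict K with hν
  haveI : IsFiniteMeasure ν := ⟨by rw [hν, Measure.restrict_apply_univ]; exact hμ⟩
  have hpos : 0 < ν Set.univ := by
    obtain ⟨p, hp⟩ := hKne
    have h := hC2 p hp 1 one_pos
    rw [hν, Measure.restrict_apply_univ]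
    exact h.trans_le (measure_mono Set.inter_subset_right)
  -- first coordinate
  have hims : ∀ (f : ℝ × ℝ → ℝ), Continuous f →
      f '' K = Set.Icc (sInf (f '' K)) (sSup (f '' K)) := by
    intro f hf
    exact eq_Icc_of_connected_compact (hConn.image f hf.continuousOn) (hKc.image hf)
  have hproj : ∀ (f : ℝ × ℝ → ℝ), Continuous f → (∀ p q : ℝ × ℝ, dist (f p) (f q) ≤ dist p q) →
      (ν {ω | f ω ∉ Set.Icc (sInf (f '' K)) (sSup (f '' K))} = 0) ∧
      (∀ x ∈ Set.Icc (sInf (f '' K)) (sSup (f '' K)), ∀ ε > (0:ℝ),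
        0 < ν {ω | x - ε < f ω ∧ f ω < x + ε}) := by
    intro f hf hlip
    set a := sInf (f '' K)
    set b := sSup (f '' K)
    have him : f '' K = Set.Icc a b := hims f hf
    constructor
    · show (μ.restrict K) (f ⁻¹' (Set.Icc a b)ᶜ) = 0
      rw [Measure.restrict_apply (hf.measurable measurableSet_Icc.compl)]
      convert measure_empty (μ := μ)
      rw [Set.eq_empty_iff_forall_notMem]
      rintro ω ⟨hω1, hω2⟩
      exact hω1 (him ▸ Set.mem_image_of_mem f hω2)
    · intro x hx ε hε
      obtain ⟨p, hpK, hpx⟩ : ∃ p ∈ K, f p = x := by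
        have : x ∈ f '' K := him ▸ hx
        obtain ⟨p, hp1, hp2⟩ := this
        exact ⟨p, hp1, hp2⟩
      have h := hC2 p hpK ε hε
      show 0 < (μ.restrict K) (f ⁻¹' Set.Ioo (x - ε) (x + ε))
      rw [Measure.restrict_apply (hf.measurable measurableSet_Ioo)]
      refine h.trans_le (measure_mono ?_)
      rintro q ⟨hq1, hq2⟩
      refine ⟨?_, hq2⟩
      have hd : dist (f q) x < ε := by
        rw [← hpx]
        exact lt_of_le_of_lt (hlip q p) hq1
      rw [Real.dist_eq, abs_lt] at hd
      exact ⟨by linarith [hd.1], by linarith [hd.2]⟩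
  have hfst : ∀ p q : ℝ × ℝ, dist (p.1) (q.1) ≤ dist p q := by
    intro p q; rw [Prod.dist_eq]; exact le_max_left _ _
  have hsnd : ∀ p q : ℝ × ℝ, dist (p.2) (q.2) ≤ dist p q := by
    intro p q; rw [Prod.dist_eq]; exact le_max_right _ _
  obtain ⟨hsupp1, hball1⟩ := hproj Prod.fst continuous_fst hfst
  obtain ⟨hsupp2, hball2⟩ := hproj Prod.snd continuous_snd hsnd
  obtain ⟨m1, hm1⟩ := core_aux ν measurable_fst hpos _ _ hsupp1 hball1
  obtain ⟨m2, hm2⟩ := core_aux ν measurable_snd hpos _ _ hsupp2 hball2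
  have i1 : ∀ y : ℝ, Integrable (fun ω : ℝ × ℝ => |y - ω.1|) ν :=
    int_abs_aux ν measurable_fst _ _ hsupp1
  have i2 : ∀ y : ℝ, Integrable (fun ω : ℝ × ℝ => |y - ω.2|) ν :=
    int_abs_aux ν measurable_snd _ _ hsupp2
  have hsplit : ∀ z : ℝ × ℝ,
      F z = (∫ ω, |z.1 - ω.1| ∂ν) + (∫ ω, |z.2 - ω.2| ∂ν) := by
    intro z
    rw [hF z]
    exact integral_add (i1 z.1) (i2 z.2)
  refine ⟨(m1, m2), fun w hw => ?_⟩
  rw [hsplit, hsplit]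
  have hcoord : w.1 ≠ m1 ∨ w.2 ≠ m2 := by
    by_contra hc
    push_neg at hc
    exact hw (Prod.ext hc.1 hc.2)
  have h1 : ∫ ω, |m1 - ω.1| ∂ν ≤ ∫ ω, |w.1 - ω.1| ∂ν := by
    rcases eq_or_ne w.1 m1 with h | h
    · rw [h]
    · exact (hm1 w.1 h).le
  have h2 : ∫ ω, |m2 - ω.2| ∂ν ≤ ∫ ω, |w.2 - ω.2| ∂ν := by
    rcases eq_or_ne w.2 m2 with h | h
    · rw [h]
    · exact (hm2 w.2 h).le
  rcases hcoord with h | h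
  · exact add_lt_add_of_lt_of_le (hm1 w.1 h) h2
  · exact add_lt_add_of_le_of_lt h1 (hm2 w.2 h)
end

section
/- If K is the triangle with vertices (0,0), (0,1), (1,0), then for all (x,y) ∈ K, F_K(x,y) = −(2/3)(x³+y³) + 2(x²+y²) − (x+y) + 2/3, and the global minimizer of F_K is (1 − √2/2, 1 − √2/2). -/
open MeasureTheory intervalIntegral

noncomputable section StmtAux

def T : Set (ℝ × ℝ) := {p : ℝ × ℝ | 0 ≤ p.1 ∧ 0 ≤ p.2 ∧ p.1 + p.2 ≤ 1}

lemma T_closed : IsClosed T := by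
  have : T = {p : ℝ × ℝ | 0 ≤ p.1} ∩ ({p | 0 ≤ p.2} ∩ {p | p.1 + p.2 ≤ 1}) := by
    ext p; simp [T, Set.mem_setOf_eq, and_assoc]
  rw [this]
  exact (isClosed_le continuous_const continuous_fst).inter
    ((isClosed_le continuous_const continuous_snd).inter
      (isClosed_le (continuous_fst.add continuous_snd) continuous_const))

lemma T_sub : T ⊆ Set.Icc (0,0) (1,1) := by
  rintro ⟨a, b⟩ ⟨h1, h2, h3⟩
  simp only [Set.mem_Icc, Prod.mk_le_mk]
  exact ⟨⟨h1, h2⟩, ⟨by linarith, by linarith⟩⟩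

lemma T_compact : IsCompact T := by
  refine IsCompact.of_isClosed_subset ?_ T_closed T_sub
  rw [Set.Icc_prod_eq]
  exact isCompact_Icc.prod isCompact_Icc

lemma T_meas : MeasurableSet T := T_closed.measurableSet

lemma T_integrableOn {f : ℝ × ℝ → ℝ} (hf : Continuous f) : IntegrableOn f T := by
  exact hf.continuousOn.integrableOn_compact T_compact

lemma fubiniT (f : ℝ → ℝ) (hf : Continuous f) :
    ∫ p in T, f p.1 = ∫ α in (0:ℝ)..1, (1 - α) * f α := by
  have hint : Integrable (T.indicator (fun p : ℝ × ℝ => f (p.1)))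
      ((volume : Measure ℝ).prod volume) := by
    rw [← Measure.volume_eq_prod]
    exact (T_integrableOn (hf.comp continuous_fst)).integrable_indicator T_meas
  have h1 : ∫ p in T, f p.1 = ∫ p, T.indicator (fun p : ℝ × ℝ => f p.1) p := by
    rw [MeasureTheory.integral_indicator T_meas]
  rw [h1, Measure.volume_eq_prod, MeasureTheory.integral_prod _ hint]
  have h2 : ∀ α : ℝ, (∫ β : ℝ, T.indicator (fun p : ℝ × ℝ => f p.1) (α, β))
      = (Set.Icc (0:ℝ) 1).indicator (fun α => (1 - α) * f α) α := by
    intro α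
    by_cases hα : 0 ≤ α
    · have : (fun β : ℝ => T.indicator (fun p : ℝ × ℝ => f p.1) (α, β))
          = (Set.Icc (0:ℝ) (1 - α)).indicator (fun _ => f α) := by
        ext β
        by_cases hβ : β ∈ Set.Icc (0:ℝ) (1 - α)
        · rw [Set.indicator_of_mem hβ]
          have : (α, β) ∈ T := ⟨hα, hβ.1, by have := hβ.2; simpa using by linarith⟩
          rw [Set.indicator_of_mem this]
        · rw [Set.indicator_of_notMem hβ, Set.indicator_of_notMem]
          intro hT
          exact hβ ⟨hT.2.1, by have := hT.2.2; simp at this ⊢; linarith⟩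
      rw [this, MeasureTheory.integral_indicator measurableSet_Icc, setIntegral_const,
        measureReal_def, Real.volume_Icc, smul_eq_mul]
      by_cases hα1 : α ≤ 1
      · rw [Set.indicator_of_mem (Set.mem_Icc.mpr ⟨hα, hα1⟩), ENNReal.toReal_ofReal (by linarith)]
        ring
      · rw [Set.indicator_of_notMem (by simp [Set.mem_Icc]; intro; linarith)]
        rw [ENNReal.ofReal_eq_zero.mpr (by linarith)]
        simp
    · have : (fun β : ℝ => T.indicator (fun p : ℝ × ℝ => f p.1) (α, β)) = fun _ => 0 := by
        ext β
        rw [Set.indicator_of_notMem]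
        intro hT
        exact hα hT.1
      rw [this, Set.indicator_of_notMem (by simp [Set.mem_Icc]; intro; linarith)]
      simp
  simp only [h2]
  rw [MeasureTheory.integral_indicator measurableSet_Icc, integral_Icc_eq_integral_Ioc,
    ← intervalIntegral.integral_of_le (by norm_num)]

lemma polyint (e a b c d : ℝ) :
    ∫ t in a..b, (e * t ^ 2 + c * t + d) =
      e * ((b ^ 3 - a ^ 3) / 3) + c * ((b ^ 2 - a ^ 2) / 2) + d * (b - a) := by
  have h1 : IntervalIntegrable (fun t : ℝ => e * t ^ 2) volume a b :=
    (continuous_const.mul (continuous_pow 2)).intervalIntegrable a b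
  have h2 : IntervalIntegrable (fun t : ℝ => c * t) volume a b :=
    (continuous_const.mul continuous_id).intervalIntegrable a b
  have h3 : IntervalIntegrable (fun t : ℝ => d) volume a b :=
    continuous_const.intervalIntegrable a b
  rw [intervalIntegral.integral_add (h1.add h2) h3, intervalIntegral.integral_add h1 h2,
    intervalIntegral.integral_const_mul, intervalIntegral.integral_const_mul,
    integral_pow, integral_id, intervalIntegral.integral_const]
  push_cast
  rw [smul_eq_mul]
  ring

lemma volT : (volume T).toReal = 1 / 2 := by
  have h := fubiniT (fun _ => (1:ℝ)) continuous_const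
  rw [setIntegral_const, smul_eq_mul, mul_one] at h
  rw [← measureReal_def, h]
  have he : (fun α : ℝ => (1 - α) * (1:ℝ)) = fun t : ℝ => (0:ℝ) * t ^ 2 + (-1) * t + 1 := by
    ext t; ring
  rw [he, polyint]
  norm_num

lemma swapT (f : ℝ → ℝ) :
    ∫ p in T, f p.2 = ∫ p in T, f p.1 := by
  have hmp : MeasurePreserving (Prod.swap : ℝ × ℝ → ℝ × ℝ)
      ((volume : Measure ℝ).prod volume) ((volume : Measure ℝ).prod volume) :=
    Measure.measurePreserving_swap
  have hemb : MeasurableEmbedding (Prod.swap : ℝ × ℝ → ℝ × ℝ) :=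
    MeasurableEquiv.prodComm.measurableEmbedding
  have hT : (Prod.swap : ℝ × ℝ → ℝ × ℝ) ⁻¹' T = T := by
    ext p; simp only [T, Set.mem_preimage, Set.mem_setOf_eq, Prod.fst_swap, Prod.snd_swap]
    constructor <;> rintro ⟨h1, h2, h3⟩ <;> exact ⟨h2, h1, by linarith⟩
  have key := hmp.setIntegral_preimage_emb hemb (fun p : ℝ × ℝ => f p.1) T
  rw [hT] at key
  calc ∫ p in T, f p.2 = ∫ p in T, f (p.swap.1) ∂((volume : Measure ℝ).prod volume) := by
        rw [← Measure.volume_eq_prod]; rfl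
    _ = ∫ p in T, f p.1 ∂((volume : Measure ℝ).prod volume) := key
    _ = ∫ p in T, f p.1 := by rw [← Measure.volume_eq_prod]

def g (t : ℝ) : ℝ := ∫ p in T, |t - p.1|

lemma g_formula {t : ℝ} (h0 : 0 ≤ t) (h1 : t ≤ 1) :
    g t = 1 / 6 - t / 2 + t ^ 2 - t ^ 3 / 3 := by
  have hc : Continuous fun s : ℝ => |t - s| := (continuous_const.sub continuous_id).abs
  have h := fubiniT (fun s => |t - s|) hc
  rw [g, h]
  have hcc : Continuous fun α : ℝ => (1 - α) * |t - α| :=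
    (continuous_const.sub continuous_id).mul hc
  have hsplit : ∫ α in (0:ℝ)..1, (1 - α) * |t - α|
      = (∫ α in (0:ℝ)..t, (1 - α) * |t - α|) + ∫ α in t..(1:ℝ), (1 - α) * |t - α| :=
    (integral_add_adjacent_intervals (hcc.intervalIntegrable 0 t)
      (hcc.intervalIntegrable t 1)).symm
  rw [hsplit]
  have e1 : ∫ α in (0:ℝ)..t, (1 - α) * |t - α|
      = ∫ α in (0:ℝ)..t, ((1:ℝ) * α ^ 2 + (-(1 + t)) * α + t) := by
    apply integral_congr
    intro α hα
    rw [Set.uIcc_of_le h0] at hα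
    dsimp only
    rw [abs_of_nonneg (by linarith [hα.2])]
    ring
  have e2 : ∫ α in t..(1:ℝ), (1 - α) * |t - α|
      = ∫ α in t..(1:ℝ), ((-1:ℝ) * α ^ 2 + (1 + t) * α + (-t)) := by
    apply integral_congr
    intro α hα
    rw [Set.uIcc_of_le h1] at hα
    dsimp only
    rw [abs_of_nonpos (by linarith [hα.1])]
    ring
  rw [e1, e2, polyint, polyint]
  ring

lemma g_convex : ConvexOn ℝ Set.univ g := by
  refine ⟨convex_univ, fun x _ y _ a b ha hb hab => ?_⟩
  simp only [smul_eq_mul, g]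
  have hix : IntegrableOn (fun p : ℝ × ℝ => |x - p.1|) T :=
    T_integrableOn ((continuous_const.sub continuous_fst).abs)
  have hiy : IntegrableOn (fun p : ℝ × ℝ => |y - p.1|) T :=
    T_integrableOn ((continuous_const.sub continuous_fst).abs)
  have hmono : ∫ p in T, |a * x + b * y - p.1|
      ≤ ∫ p in T, (a * |x - p.1| + b * |y - p.1|) := by
    refine integral_mono
      (T_integrableOn ((continuous_const.sub continuous_fst).abs))
      ((hix.const_mul a).add (hiy.const_mul b)) (fun p => ?_)
    have h1 : a * x + b * y - p.1 = a * (x - p.1) + b * (y - p.1) := by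
      linear_combination p.1 * hab
    calc |a * x + b * y - p.1| = |a * (x - p.1) + b * (y - p.1)| := by rw [h1]
      _ ≤ |a * (x - p.1)| + |b * (y - p.1)| := abs_add_le _ _
      _ = a * |x - p.1| + b * |y - p.1| := by
          rw [abs_mul, abs_mul, abs_of_nonneg ha, abs_of_nonneg hb]
  calc ∫ p in T, |a * x + b * y - p.1|
      ≤ ∫ p in T, (a * |x - p.1| + b * |y - p.1|) := hmono
    _ = a * (∫ p in T, |x - p.1|) + b * (∫ p in T, |y - p.1|) := by
        rw [integral_add (hix.const_mul a) (hiy.const_mul b),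
          MeasureTheory.integral_const_mul, MeasureTheory.integral_const_mul]

lemma sqrt2_lt_two : Real.sqrt 2 < 2 := by
  nlinarith [Real.sq_sqrt (by norm_num : (0:ℝ) ≤ 2), Real.sqrt_nonneg 2]

lemma m_mem : (0:ℝ) < 1 - Real.sqrt 2 / 2 ∧ 1 - Real.sqrt 2 / 2 < 1 := by
  refine ⟨by nlinarith [sqrt2_lt_two], ?_⟩
  nlinarith [Real.sqrt_pos.mpr (by norm_num : (0:ℝ) < 2)]

lemma g_min_Icc {t : ℝ} (h0 : 0 ≤ t) (h1 : t ≤ 1) :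
    g (1 - Real.sqrt 2 / 2) ≤ g t := by
  have hm := m_mem
  rw [g_formula h0 h1, g_formula hm.1.le hm.2.le]
  have s2 : Real.sqrt 2 ^ 2 = 2 := Real.sq_sqrt (by norm_num)
  have key : (1 / 6 - t / 2 + t ^ 2 - t ^ 3 / 3)
      - (1 / 6 - (1 - Real.sqrt 2 / 2) / 2 + (1 - Real.sqrt 2 / 2) ^ 2
        - (1 - Real.sqrt 2 / 2) ^ 3 / 3)
      = (t - (1 - Real.sqrt 2 / 2)) ^ 2 * (1 + Real.sqrt 2 - t) / 3 := by
    linear_combination (-(t - (1 - Real.sqrt 2 / 2)) / 4) * s2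
  have hpos : 0 ≤ (t - (1 - Real.sqrt 2 / 2)) ^ 2 * (1 + Real.sqrt 2 - t) / 3 := by
    have : (0:ℝ) ≤ 1 + Real.sqrt 2 - t := by
      have := Real.sqrt_nonneg 2; linarith
    positivity
  linarith

lemma g_min (t : ℝ) : g (1 - Real.sqrt 2 / 2) ≤ g t := by
  set m := 1 - Real.sqrt 2 / 2 with hm
  have hm0 : 0 < m := by rw [hm]; exact m_mem.1
  have hm1 : m < 1 := by rw [hm]; exact m_mem.2
  rcases le_or_gt t 0 with ht | ht
  · rcases eq_or_lt_of_le ht with rfl | ht'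
    · exact g_min_Icc le_rfl zero_le_one
    · have h0seg : (0:ℝ) ∈ openSegment ℝ t m := by
        rw [openSegment_eq_Ioo (by linarith : t < m)]
        exact ⟨ht', hm0⟩
      have h0 : g m ≤ g 0 := g_min_Icc le_rfl zero_le_one
      have := g_convex.le_left_of_right_le (Set.mem_univ t) (Set.mem_univ m) h0seg h0
      linarith
  · rcases le_or_gt t 1 with ht1 | ht1
    · exact g_min_Icc ht.le ht1
    · have h1seg : (1:ℝ) ∈ openSegment ℝ m t := by
        rw [openSegment_eq_Ioo (by linarith : m < t)]
        exact ⟨hm1, ht1⟩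
      have h1 : g m ≤ g 1 := g_min_Icc zero_le_one le_rfl
      have := g_convex.le_right_of_left_le (Set.mem_univ m) (Set.mem_univ t) h1seg h1
      linarith

theorem stmt9 (K : Set (ℝ × ℝ))
    (hK : K = {p : ℝ × ℝ | 0 ≤ p.1 ∧ 0 ≤ p.2 ∧ p.1 + p.2 ≤ 1})
    (F : ℝ × ℝ → ℝ)
    (hF : ∀ z : ℝ × ℝ, F z =
      (volume K).toReal⁻¹ * ∫ p in K, (|z.1 - p.1| + |z.2 - p.2|)) :
    (∀ z ∈ K, F z = -(2 / 3) * (z.1 ^ 3 + z.2 ^ 3) + 2 * (z.1 ^ 2 + z.2 ^ 2)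
        - (z.1 + z.2) + 2 / 3) ∧
      (∀ w : ℝ × ℝ, F (1 - Real.sqrt 2 / 2, 1 - Real.sqrt 2 / 2) ≤ F w) := by
  have hKT : K = T := hK
  have hvol : (volume K).toReal⁻¹ = 2 := by rw [hKT, volT]; norm_num
  have hsplit : ∀ z : ℝ × ℝ, (∫ p in K, (|z.1 - p.1| + |z.2 - p.2|)) = g z.1 + g z.2 := by
    intro z
    rw [hKT]
    have h1 : IntegrableOn (fun p : ℝ × ℝ => |z.1 - p.1|) T :=
      T_integrableOn ((continuous_const.sub continuous_fst).abs)
    have h2 : IntegrableOn (fun p : ℝ × ℝ => |z.2 - p.2|) T :=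
      T_integrableOn ((continuous_const.sub continuous_snd).abs)
    rw [MeasureTheory.integral_add h1 h2]
    congr 1
    exact swapT (fun s => |z.2 - s|)
  have hFg : ∀ z : ℝ × ℝ, F z = 2 * (g z.1 + g z.2) := fun z => by
    rw [hF z, hvol, hsplit]
  constructor
  · intro z hz
    rw [hK] at hz
    obtain ⟨h1, h2, h3⟩ := hz
    rw [hFg, g_formula h1 (by linarith), g_formula h2 (by linarith)]
    ring
  · intro w
    rw [hFg, hFg]
    have h1 := g_min w.1
    have h2 := g_min w.2
    have e1 : (1 - Real.sqrt 2 / 2, 1 - Real.sqrt 2 / 2).1 = 1 - Real.sqrt 2 / 2 := rfl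
    have e2 : (1 - Real.sqrt 2 / 2, 1 - Real.sqrt 2 / 2).2 = 1 - Real.sqrt 2 / 2 := rfl
    rw [e1, e2]
    linarith

end StmtAux
end

section
/- Let μ₁, μ₂ be σ-finite measures on ℝ absolutely continuous with respect to Lebesgue measure with bounded Radon–Nikodym derivatives, let μ = μ₁×μ₂ be supported by a compact body K ⊂ ℝ², and suppose μ gives zero measure to all vertical and horizontal lines. Then the gradient of F_{K,μ} is Lipschitz continuous on ℝ²; in particular |D₁F_{K,μ}(q) − D₁F_{K,μ}(p)| = 2 μ({(α,β)∈K : min{p⁽¹⁾,q⁽¹⁾} < α < max{p⁽¹⁾,q⁽¹⁾}}) ≤ 2 C₁ (sup_s Y_{K,μ}(s)) |p⁽¹⁾ − q⁽¹⁾| for all p,q ∈ ℝ², where C₁ bounds the density of μ₁ and Y_{K,μ}(x) = μ₂({y : (x,y)∈K}). -/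
open MeasureTheory Set Filter
open scoped ENNReal

-- Icc bound from Ioc bound
theorem core_Icc (ν : Measure ℝ) (M : ℝ)
    (hν : ∀ a b : ℝ, a ≤ b → ν (Set.Ioc a b) ≤ ENNReal.ofReal (M * (b - a))) :
    ∀ a b : ℝ, a ≤ b → ν (Set.Icc a b) ≤ ENNReal.ofReal (M * (b - a)) := by
  intro a b hab
  have h1 : Tendsto (fun a' : ℝ => ENNReal.ofReal (M * (b - a'))) (nhdsWithin a (Set.Iio a))
      (nhds (ENNReal.ofReal (M * (b - a)))) := by
    apply Filter.Tendsto.mono_left _ nhdsWithin_le_nhds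
    exact (ENNReal.continuous_ofReal.tendsto _).comp (by exact Continuous.tendsto (by continuity) a)
  refine ge_of_tendsto h1 ?_
  filter_upwards [self_mem_nhdsWithin] with a' (ha' : a' < a)
  calc ν (Set.Icc a b) ≤ ν (Set.Ioc a' b) :=
        measure_mono (Set.Icc_subset_Ioc_iff hab |>.mpr ⟨ha', le_refl b⟩)
    _ ≤ _ := hν a' b (le_trans ha'.le hab)


theorem core_deriv (ν : Measure ℝ) [IsFiniteMeasure ν] (M : ℝ) (hM : 0 ≤ M)
    (hν : ∀ a b : ℝ, a ≤ b → ν (Set.Ioc a b) ≤ ENNReal.ofReal (M * (b - a)))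
    (hint : ∀ t : ℝ, Integrable (fun α => |t - α|) ν) (x : ℝ) :
    HasDerivAt (fun t => ∫ α, |t - α| ∂ν)
      ((ν (Set.Iio x)).toReal - (ν (Set.Ioi x)).toReal) x := by
  set D : ℝ := (ν (Set.Iio x)).toReal - (ν (Set.Ioi x)).toReal with hD
  set g : ℝ → ℝ := fun t => ∫ α, |t - α| ∂ν with hg
  set e : ℝ → ℝ := fun α => Set.indicator (Set.Iio x) (fun _ => (1:ℝ)) α
      - Set.indicator (Set.Ioi x) (fun _ => (1:ℝ)) α with he
  have hiA : Integrable (fun α => Set.indicator (Set.Iio x) (fun _ => (1:ℝ)) α) ν := by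
    rw [show (fun α => Set.indicator (Set.Iio x) (fun _ => (1:ℝ)) α)
      = Set.indicator (Set.Iio x) (fun _ => (1:ℝ)) from rfl]
    exact (integrable_indicator_iff measurableSet_Iio).2
      (integrableOn_const (measure_ne_top _ _))
  have hiB : Integrable (fun α => Set.indicator (Set.Ioi x) (fun _ => (1:ℝ)) α) ν := by
    rw [show (fun α => Set.indicator (Set.Ioi x) (fun _ => (1:ℝ)) α)
      = Set.indicator (Set.Ioi x) (fun _ => (1:ℝ)) from rfl]
    exact (integrable_indicator_iff measurableSet_Ioi).2
      (integrableOn_const (measure_ne_top _ _))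
  have he_int : Integrable e ν := hiA.sub hiB
  have he_val : ∫ α, e α ∂ν = D := by
    rw [he, hD]
    rw [integral_sub hiA hiB, integral_indicator_const _ measurableSet_Iio,
        integral_indicator_const _ measurableSet_Ioi]
    simp
    rfl
  have habs_e : ∀ α : ℝ, |e α| ≤ 1 := by
    intro α
    simp only [he, Set.indicator]
    split_ifs <;> norm_num
  have est : ∀ y : ℝ, |g y - g x - (y - x) * D| ≤ 2 * M * (y - x) ^ 2 := by
    intro y
    have i1 : Integrable (fun α => |y - α| - |x - α|) ν := (hint y).sub (hint x)
    have i2 : Integrable (fun α => (y - x) * e α) ν := he_int.const_mul _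
    have hrw : ∫ α, (|y - α| - |x - α| - (y - x) * e α) ∂ν
        = g y - g x - (y - x) * D := by
      rw [integral_sub i1 i2, integral_sub (hint y) (hint x), integral_const_mul, he_val]
    have hIccCase : ∀ α ∈ Set.Icc (min x y) (max x y),
        ‖|y - α| - |x - α| - (y - x) * e α‖ ≤ 2 * |y - x| := by
      intro α _
      have h1 : abs (|y - α| - |x - α|) ≤ |y - x| := by
        have := abs_abs_sub_abs_le_abs_sub (y - α) (x - α)
        simpa using this
      have h3 : |(y - x) * e α| ≤ |y - x| := by
        rw [abs_mul]
        nlinarith [abs_nonneg (y - x), habs_e α, abs_nonneg (e α)]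
      calc ‖|y - α| - |x - α| - (y - x) * e α‖
          ≤ abs (|y - α| - |x - α|) + |(y - x) * e α| := abs_sub _ _
        _ ≤ |y - x| + |y - x| := add_le_add h1 h3
        _ = 2 * |y - x| := by ring
    have hpt : ∀ α : ℝ, ‖|y - α| - |x - α| - (y - x) * e α‖
        ≤ Set.indicator (Set.Icc (min x y) (max x y)) (fun _ => 2 * |y - x|) α := by
      intro α
      by_cases hmem : α ∈ Set.Icc (min x y) (max x y)
      · rw [Set.indicator_of_mem hmem]
        exact hIccCase α hmem
      · rw [Set.indicator_of_notMem hmem]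
        rcases not_and_or.1 (fun h => hmem ⟨le_of_not_gt (fun hc => (not_le.2 hc) h.1),
          h.2⟩) with h | h
        all_goals simp only [Set.mem_Icc, not_and_or, not_le] at hmem
        all_goals rcases hmem with hc | hc
        · -- α < min x y
          have h1 : α < x := lt_of_lt_of_le hc (min_le_left _ _)
          have h2 : α < y := lt_of_lt_of_le hc (min_le_right _ _)
          have hev : e α = 1 := by
            simp [he, Set.indicator, Set.mem_Iio, Set.mem_Ioi, h1, not_lt.2 h1.le]
          rw [hev, abs_of_pos (by linarith : (0:ℝ) < y - α),
            abs_of_pos (by linarith : (0:ℝ) < x - α)]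
          have : y - α - (x - α) - (y - x) * 1 = 0 := by ring
          rw [this, norm_zero]
        · -- max x y < α
          have h1 : x < α := lt_of_le_of_lt (le_max_left x y) hc
          have h2 : y < α := lt_of_le_of_lt (le_max_right x y) hc
          have hev : e α = -1 := by
            simp [he, Set.indicator, Set.mem_Iio, Set.mem_Ioi, not_lt.2 h1.le, h1]
          rw [hev, abs_of_neg (by linarith : y - α < 0),
            abs_of_neg (by linarith : x - α < 0)]
          have : -(y - α) - -(x - α) - (y - x) * (-1) = 0 := by ring
          rw [this, norm_zero]
        · have h1 : α < x := lt_of_lt_of_le hc (min_le_left _ _)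
          have h2 : α < y := lt_of_lt_of_le hc (min_le_right _ _)
          have hev : e α = 1 := by
            simp [he, Set.indicator, Set.mem_Iio, Set.mem_Ioi, h1, not_lt.2 h1.le]
          rw [hev, abs_of_pos (by linarith : (0:ℝ) < y - α),
            abs_of_pos (by linarith : (0:ℝ) < x - α)]
          have : y - α - (x - α) - (y - x) * 1 = 0 := by ring
          rw [this, norm_zero]
        · have h1 : x < α := lt_of_le_of_lt (le_max_left x y) hc
          have h2 : y < α := lt_of_le_of_lt (le_max_right x y) hc
          have hev : e α = -1 := by
            simp [he, Set.indicator, Set.mem_Iio, Set.mem_Ioi, not_lt.2 h1.le, h1]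
          rw [hev, abs_of_neg (by linarith : y - α < 0),
            abs_of_neg (by linarith : x - α < 0)]
          have : -(y - α) - -(x - α) - (y - x) * (-1) = 0 := by ring
          rw [this, norm_zero]
    have hbound_int : Integrable
        (Set.indicator (Set.Icc (min x y) (max x y)) (fun _ => 2 * |y - x|)) ν :=
      (integrable_indicator_iff measurableSet_Icc).2
        (integrableOn_const (measure_ne_top _ _))
    have hnorm : ‖∫ α, (|y - α| - |x - α| - (y - x) * e α) ∂ν‖
        ≤ ∫ α, Set.indicator (Set.Icc (min x y) (max x y)) (fun _ => 2 * |y - x|) α ∂ν :=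
      norm_integral_le_of_norm_le hbound_int (Filter.Eventually.of_forall hpt)
    have hIcc : (ν (Set.Icc (min x y) (max x y))).toReal ≤ M * |y - x| := by
      have h := core_Icc ν M hν (min x y) (max x y) min_le_max
      have heq : M * (max x y - min x y) = M * |y - x| := by
        rw [max_sub_min_eq_abs, abs_sub_comm]
      rw [heq] at h
      exact ENNReal.toReal_le_of_le_ofReal (by positivity) h
    rw [← hrw]
    calc |∫ α, (|y - α| - |x - α| - (y - x) * e α) ∂ν|
        ≤ ∫ α, Set.indicator (Set.Icc (min x y) (max x y)) (fun _ => 2 * |y - x|) α ∂ν :=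
          hnorm
      _ = (ν (Set.Icc (min x y) (max x y))).toReal * (2 * |y - x|) := by
          rw [show (fun α => Set.indicator (Set.Icc (min x y) (max x y))
            (fun _ => 2 * |y - x|) α)
            = Set.indicator (Set.Icc (min x y) (max x y)) (fun _ => 2 * |y - x|) from rfl,
            integral_indicator_const _ measurableSet_Icc]
          simp [mul_comm]
          exact Or.inl rfl
      _ ≤ M * |y - x| * (2 * |y - x|) :=
          mul_le_mul_of_nonneg_right hIcc (by positivity)
      _ = 2 * M * (y - x) ^ 2 := by rw [← sq_abs]; ring
  rw [hasDerivAt_iff_isLittleO]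
  have hbigO : (fun y => g y - g x - (y - x) • D) =O[nhds x] (fun y => ‖y - x‖ ^ 2) := by
    apply Asymptotics.IsBigO.of_bound (2 * M)
    filter_upwards with y
    simp only [smul_eq_mul, Real.norm_eq_abs, norm_pow, sq_abs]
    exact est y
  exact hbigO.trans_isLittleO (Asymptotics.isLittleO_pow_sub_sub x (by norm_num : 1 < 2))

theorem core_diff (ν : Measure ℝ) [IsFiniteMeasure ν]
    (hnull : ∀ x : ℝ, ν {x} = 0) (p q : ℝ) (hpq : p ≤ q) :
    ((ν (Set.Iio q)).toReal - (ν (Set.Ioi q)).toReal)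
      - ((ν (Set.Iio p)).toReal - (ν (Set.Ioi p)).toReal)
      = 2 * (ν (Set.Ioo p q)).toReal := by
  have : NullSingletonClass ν := ⟨hnull⟩
  have h1 : ν (Set.Iio q) = ν (Set.Iio p) + ν (Set.Ioo p q) := by
    rw [← Set.Iio_union_Ico_eq_Iio hpq,
      measure_union (by
        refine Set.disjoint_left.2 ?_
        intro a ha hb
        exact absurd hb.1 (not_le.2 ha)) measurableSet_Ico,
      measure_congr (Ioo_ae_eq_Ico (μ := ν)).symm]
  have h2 : ν (Set.Ioi p) = ν (Set.Ioo p q) + ν (Set.Ioi q) := by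
    rw [← Set.Ioc_union_Ioi_eq_Ioi hpq,
      measure_union (by
        refine Set.disjoint_left.2 ?_
        intro a ha hb
        exact absurd hb (not_lt.2 ha.2)) measurableSet_Ioi,
      measure_congr (Ioo_ae_eq_Ioc (μ := ν)).symm]
  have f1 : ν (Set.Iio p) ≠ ⊤ := measure_ne_top _ _
  have f2 : ν (Set.Ioo p q) ≠ ⊤ := measure_ne_top _ _
  have f3 : ν (Set.Ioi q) ≠ ⊤ := measure_ne_top _ _
  rw [h1, h2, ENNReal.toReal_add f1 f2, ENNReal.toReal_add f2 f3]
  ring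

theorem core_null (ν : Measure ℝ) (M : ℝ)
    (hν : ∀ a b : ℝ, a ≤ b → ν (Set.Ioc a b) ≤ ENNReal.ofReal (M * (b - a))) :
    ∀ x : ℝ, ν {x} = 0 := by
  intro x
  have h := core_Icc ν M hν x x le_rfl
  rw [Set.Icc_self] at h
  simpa using h

theorem core_lip (ν : Measure ℝ) [IsFiniteMeasure ν] (M : ℝ) (hM : 0 ≤ M)
    (hν : ∀ a b : ℝ, a ≤ b → ν (Set.Ioc a b) ≤ ENNReal.ofReal (M * (b - a))) (p q : ℝ) :
    |((ν (Set.Iio q)).toReal - (ν (Set.Ioi q)).toReal)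
      - ((ν (Set.Iio p)).toReal - (ν (Set.Ioi p)).toReal)|
      = 2 * (ν (Set.Ioo (min p q) (max p q))).toReal ∧
    |((ν (Set.Iio q)).toReal - (ν (Set.Ioi q)).toReal)
      - ((ν (Set.Iio p)).toReal - (ν (Set.Ioi p)).toReal)| ≤ 2 * M * |p - q| := by
  have hnull := core_null ν M hν
  have heq : |((ν (Set.Iio q)).toReal - (ν (Set.Ioi q)).toReal)
      - ((ν (Set.Iio p)).toReal - (ν (Set.Ioi p)).toReal)|
      = 2 * (ν (Set.Ioo (min p q) (max p q))).toReal := by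
    rcases le_total p q with hpq | hpq
    · rw [min_eq_left hpq, max_eq_right hpq, core_diff ν hnull p q hpq]
      exact abs_of_nonneg (by positivity)
    · rw [min_eq_right hpq, max_eq_left hpq, abs_sub_comm, core_diff ν hnull q p hpq]
      exact abs_of_nonneg (by positivity)
  refine ⟨heq, ?_⟩
  rw [heq]
  have hle : ν (Set.Ioo (min p q) (max p q)) ≤ ENNReal.ofReal (M * (max p q - min p q)) :=
    le_trans (measure_mono Set.Ioo_subset_Ioc_self) (hν _ _ min_le_max)
  have htr : (ν (Set.Ioo (min p q) (max p q))).toReal ≤ M * (max p q - min p q) :=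
    ENNReal.toReal_le_of_le_ofReal (mul_nonneg hM (sub_nonneg.2 min_le_max)) hle
  rw [max_sub_min_eq_abs, abs_sub_comm] at htr
  linarith

theorem stmt17 (K : Set (ℝ × ℝ)) (hKne : K.Nonempty) (hKc : IsCompact K)
    (hKcl : K = closure (interior K))
    (f₁ f₂ : ℝ → ℝ≥0∞) (hf₁ : Measurable f₁) (hf₂ : Measurable f₂)
    (C₁ C₂ : ℝ) (hC₁ : 0 < C₁) (hC₂ : 0 < C₂)
    (hf₁b : ∀ s, f₁ s ≤ ENNReal.ofReal C₁) (hf₂b : ∀ s, f₂ s ≤ ENNReal.ofReal C₂)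
    (μ₁ μ₂ : Measure ℝ) (hμ₁ : μ₁ = volume.withDensity f₁)
    (hμ₂ : μ₂ = volume.withDensity f₂)
    (μ : Measure (ℝ × ℝ)) (hμ : μ = μ₁.prod μ₂)
    (hsupp : μ Kᶜ = 0)
    (hC3 : ∀ x : ℝ, μ {p ∈ K | p.1 = x} = 0 ∧ μ {p ∈ K | p.2 = x} = 0)
    (F : ℝ × ℝ → ℝ)
    (hF : ∀ z : ℝ × ℝ, F z = ∫ p in K, (|z.1 - p.1| + |z.2 - p.2|) ∂μ) :
    (∃ L : ℝ, 0 ≤ L ∧ ∀ p q : ℝ × ℝ,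
        ‖fderiv ℝ F p - fderiv ℝ F q‖ ≤ L * ‖p - q‖) ∧
    (∀ p q : ℝ × ℝ,
      |deriv (fun t => F (t, q.2)) q.1 - deriv (fun t => F (t, p.2)) p.1|
        = 2 * (μ {z ∈ K | min p.1 q.1 < z.1 ∧ z.1 < max p.1 q.1}).toReal ∧
      |deriv (fun t => F (t, q.2)) q.1 - deriv (fun t => F (t, p.2)) p.1|
        ≤ 2 * C₁ * (⨆ s : ℝ, (μ₂ {y : ℝ | (s, y) ∈ K}).toReal) * |p.1 - q.1|) := by
  have hKm : MeasurableSet K := hKc.isClosed.measurableSet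
  -- bounding radius
  obtain ⟨R, hR0, hR⟩ : ∃ R : ℝ, 0 < R ∧ ∀ z ∈ K, |z.1| ≤ R ∧ |z.2| ≤ R := by
    obtain ⟨R, hRb⟩ := hKc.isBounded.subset_closedBall 0
    refine ⟨max R 1, lt_of_lt_of_le one_pos (le_max_right _ _), fun z hz => ?_⟩
    have hz' := hRb hz
    rw [Metric.mem_closedBall, dist_zero_right] at hz'
    constructor
    · calc |z.1| = ‖z.1‖ := rfl
        _ ≤ ‖z‖ := norm_fst_le z
        _ ≤ max R 1 := le_trans hz' (le_max_left _ _)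
    · calc |z.2| = ‖z.2‖ := rfl
        _ ≤ ‖z‖ := norm_snd_le z
        _ ≤ max R 1 := le_trans hz' (le_max_left _ _)
  have hsf₁ : SFinite μ₁ := by rw [hμ₁]; infer_instance
  have hsf₂ : SFinite μ₂ := by rw [hμ₂]; infer_instance
  have hμ₁le : ∀ s : Set ℝ, MeasurableSet s → μ₁ s ≤ ENNReal.ofReal C₁ * volume s := by
    intro s hs
    rw [hμ₁, withDensity_apply _ hs]
    calc ∫⁻ x in s, f₁ x ≤ ∫⁻ _ in s, ENNReal.ofReal C₁ := lintegral_mono fun x => hf₁b x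
      _ = ENNReal.ofReal C₁ * volume s := by rw [setLIntegral_const]
  have hμ₂le : ∀ s : Set ℝ, MeasurableSet s → μ₂ s ≤ ENNReal.ofReal C₂ * volume s := by
    intro s hs
    rw [hμ₂, withDensity_apply _ hs]
    calc ∫⁻ x in s, f₂ x ≤ ∫⁻ _ in s, ENNReal.ofReal C₂ := lintegral_mono fun x => hf₂b x
      _ = ENNReal.ofReal C₂ * volume s := by rw [setLIntegral_const]
  have hbox : K ⊆ Set.Icc (-R) R ×ˢ Set.Icc (-R) R := by
    intro z hz
    obtain ⟨h1, h2⟩ := hR z hz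
    exact ⟨⟨(abs_le.1 h1).1, (abs_le.1 h1).2⟩, ⟨(abs_le.1 h2).1, (abs_le.1 h2).2⟩⟩
  have hIccle₁ : μ₁ (Set.Icc (-R) R) < ⊤ := by
    refine lt_of_le_of_lt (hμ₁le _ measurableSet_Icc) ?_
    rw [Real.volume_Icc]
    exact ENNReal.mul_lt_top ENNReal.ofReal_lt_top ENNReal.ofReal_lt_top
  have hIccle₂ : μ₂ (Set.Icc (-R) R) < ⊤ := by
    refine lt_of_le_of_lt (hμ₂le _ measurableSet_Icc) ?_
    rw [Real.volume_Icc]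
    exact ENNReal.mul_lt_top ENNReal.ofReal_lt_top ENNReal.ofReal_lt_top
  have hμfin : IsFiniteMeasure μ := by
    constructor
    have h1 : μ Set.univ ≤ μ K + μ Kᶜ := by
      rw [← Set.union_compl_self K]; exact measure_union_le _ _
    rw [hsupp, add_zero] at h1
    have h2 : μ K ≤ μ₁ (Set.Icc (-R) R) * μ₂ (Set.Icc (-R) R) := by
      rw [hμ]
      exact le_trans (measure_mono hbox) (le_of_eq (Measure.prod_prod _ _))
    exact lt_of_le_of_lt (le_trans h1 h2) (ENNReal.mul_lt_top hIccle₁ hIccle₂)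
  have hconc : ∀ A : Set (ℝ × ℝ), μ A = μ (A ∩ K) := by
    intro A
    refine le_antisymm ?_ (measure_mono Set.inter_subset_left)
    calc μ A ≤ μ ((A ∩ K) ∪ Kᶜ) := measure_mono (fun z hz => by
          by_cases hzK : z ∈ K
          · exact Or.inl ⟨hz, hzK⟩
          · exact Or.inr hzK)
      _ ≤ μ (A ∩ K) + μ Kᶜ := measure_union_le _ _
      _ = μ (A ∩ K) := by rw [hsupp, add_zero]
  set ν₁ : Measure ℝ := μ.map Prod.fst with hν₁def
  set ν₂ : Measure ℝ := μ.map Prod.snd with hν₂def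
  have hν₁app : ∀ s : Set ℝ, MeasurableSet s → ν₁ s = μ (Prod.fst ⁻¹' s) :=
    fun s hs => Measure.map_apply measurable_fst hs
  have hν₂app : ∀ s : Set ℝ, MeasurableSet s → ν₂ s = μ (Prod.snd ⁻¹' s) :=
    fun s hs => Measure.map_apply measurable_snd hs
  have hν₁fin : IsFiniteMeasure ν₁ := Measure.isFiniteMeasure_map μ _
  have hν₂fin : IsFiniteMeasure ν₂ := Measure.isFiniteMeasure_map μ _
  -- slice functions
  have hYm : ∀ s : ℝ, MeasurableSet {y : ℝ | (s, y) ∈ K} := fun s =>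
    measurable_prodMk_left hKm
  have hXm : ∀ s : ℝ, MeasurableSet {x : ℝ | (x, s) ∈ K} := fun s =>
    measurable_prodMk_right hKm
  have hYle : ∀ s : ℝ, μ₂ {y : ℝ | (s, y) ∈ K} ≤ ENNReal.ofReal (C₂ * (2 * R)) := by
    intro s
    have hsub : {y : ℝ | (s, y) ∈ K} ⊆ Set.Icc (-R) R := fun y hy =>
      abs_le.1 (hR _ hy).2
    calc μ₂ {y : ℝ | (s, y) ∈ K} ≤ μ₂ (Set.Icc (-R) R) := measure_mono hsub
      _ ≤ ENNReal.ofReal C₂ * volume (Set.Icc (-R) R) := hμ₂le _ measurableSet_Icc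
      _ = ENNReal.ofReal (C₂ * (2 * R)) := by
          rw [Real.volume_Icc, ← ENNReal.ofReal_mul hC₂.le]
          congr 1; ring
  have hXle : ∀ s : ℝ, μ₁ {x : ℝ | (x, s) ∈ K} ≤ ENNReal.ofReal (C₁ * (2 * R)) := by
    intro s
    have hsub : {x : ℝ | (x, s) ∈ K} ⊆ Set.Icc (-R) R := fun x hx =>
      abs_le.1 (hR _ hx).1
    calc μ₁ {x : ℝ | (x, s) ∈ K} ≤ μ₁ (Set.Icc (-R) R) := measure_mono hsub
      _ ≤ ENNReal.ofReal C₁ * volume (Set.Icc (-R) R) := hμ₁le _ measurableSet_Icc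
      _ = ENNReal.ofReal (C₁ * (2 * R)) := by
          rw [Real.volume_Icc, ← ENNReal.ofReal_mul hC₁.le]
          congr 1; ring
  set Ms : ℝ := ⨆ s : ℝ, (μ₂ {y : ℝ | (s, y) ∈ K}).toReal with hMsdef
  set Ms' : ℝ := ⨆ s : ℝ, (μ₁ {x : ℝ | (x, s) ∈ K}).toReal with hMs'def
  have hbddY : BddAbove (Set.range fun s : ℝ => (μ₂ {y : ℝ | (s, y) ∈ K}).toReal) := by
    refine ⟨C₂ * (2 * R), ?_⟩
    rintro v ⟨s, rfl⟩
    exact ENNReal.toReal_le_of_le_ofReal (by positivity) (hYle s)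
  have hbddX : BddAbove (Set.range fun s : ℝ => (μ₁ {x : ℝ | (x, s) ∈ K}).toReal) := by
    refine ⟨C₁ * (2 * R), ?_⟩
    rintro v ⟨s, rfl⟩
    exact ENNReal.toReal_le_of_le_ofReal (by positivity) (hXle s)
  have hMs0 : 0 ≤ Ms := le_trans ENNReal.toReal_nonneg (le_ciSup hbddY 0)
  have hMs'0 : 0 ≤ Ms' := le_trans ENNReal.toReal_nonneg (le_ciSup hbddX 0)
  have hYMs : ∀ s : ℝ, μ₂ {y : ℝ | (s, y) ∈ K} ≤ ENNReal.ofReal Ms := by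
    intro s
    rw [← ENNReal.ofReal_toReal (ne_top_of_lt (lt_of_le_of_lt (hYle s)
      ENNReal.ofReal_lt_top))]
    exact ENNReal.ofReal_le_ofReal (le_ciSup hbddY s)
  have hXMs : ∀ s : ℝ, μ₁ {x : ℝ | (x, s) ∈ K} ≤ ENNReal.ofReal Ms' := by
    intro s
    rw [← ENNReal.ofReal_toReal (ne_top_of_lt (lt_of_le_of_lt (hXle s)
      ENNReal.ofReal_lt_top))]
    exact ENNReal.ofReal_le_ofReal (le_ciSup hbddX s)
  -- strip bounds
  have hstrip₁ : ∀ S : Set ℝ, MeasurableSet S →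
      μ (Prod.fst ⁻¹' S) ≤ ENNReal.ofReal Ms * μ₁ S := by
    intro S hS
    rw [hconc (Prod.fst ⁻¹' S)]
    have hmeas : MeasurableSet (Prod.fst ⁻¹' S ∩ K) := (measurable_fst hS).inter hKm
    rw [hμ, Measure.prod_apply hmeas]
    have hsl : ∀ x : ℝ, μ₂ (Prod.mk x ⁻¹' (Prod.fst ⁻¹' S ∩ K))
        ≤ S.indicator (fun _ => ENNReal.ofReal Ms) x := by
      intro x
      by_cases hx : x ∈ S
      · rw [Set.indicator_of_mem hx]
        refine le_trans (measure_mono ?_) (hYMs x)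
        intro y hy
        exact hy.2
      · rw [Set.indicator_of_notMem hx]
        have hemp : Prod.mk x ⁻¹' (Prod.fst ⁻¹' S ∩ K) = ∅ := by
          ext y
          simp only [Set.mem_preimage, Set.mem_inter_iff, Set.mem_empty_iff_false,
            iff_false, not_and]
          intro hmem
          exact absurd hmem hx
        rw [hemp, measure_empty]
    calc ∫⁻ x, μ₂ (Prod.mk x ⁻¹' (Prod.fst ⁻¹' S ∩ K)) ∂μ₁
        ≤ ∫⁻ x, S.indicator (fun _ => ENNReal.ofReal Ms) x ∂μ₁ := lintegral_mono hsl
      _ = ENNReal.ofReal Ms * μ₁ S := by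
          rw [lintegral_indicator hS, setLIntegral_const]
  have hstrip₂ : ∀ S : Set ℝ, MeasurableSet S →
      μ (Prod.snd ⁻¹' S) ≤ ENNReal.ofReal Ms' * μ₂ S := by
    intro S hS
    rw [hconc (Prod.snd ⁻¹' S)]
    have hmeas : MeasurableSet (Prod.snd ⁻¹' S ∩ K) := (measurable_snd hS).inter hKm
    rw [hμ, Measure.prod_apply_symm hmeas]
    have hsl : ∀ y : ℝ, μ₁ ((fun x => (x, y)) ⁻¹' (Prod.snd ⁻¹' S ∩ K))
        ≤ S.indicator (fun _ => ENNReal.ofReal Ms') y := by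
      intro y
      by_cases hy : y ∈ S
      · rw [Set.indicator_of_mem hy]
        refine le_trans (measure_mono ?_) (hXMs y)
        intro x hx
        exact hx.2
      · rw [Set.indicator_of_notMem hy]
        have hemp : (fun x => (x, y)) ⁻¹' (Prod.snd ⁻¹' S ∩ K) = ∅ := by
          ext x
          simp only [Set.mem_preimage, Set.mem_inter_iff, Set.mem_empty_iff_false,
            iff_false, not_and]
          intro hmem
          exact absurd hmem hy
        rw [hemp, measure_empty]
    calc ∫⁻ y, μ₁ ((fun x => (x, y)) ⁻¹' (Prod.snd ⁻¹' S ∩ K)) ∂μ₂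
        ≤ ∫⁻ y, S.indicator (fun _ => ENNReal.ofReal Ms') y ∂μ₂ := lintegral_mono hsl
      _ = ENNReal.ofReal Ms' * μ₂ S := by
          rw [lintegral_indicator hS, setLIntegral_const]
  have hν₁Ioc : ∀ a b : ℝ, a ≤ b → ν₁ (Set.Ioc a b) ≤ ENNReal.ofReal (C₁ * Ms * (b - a)) := by
    intro a b hab
    rw [hν₁app _ measurableSet_Ioc]
    refine le_trans (hstrip₁ _ measurableSet_Ioc) ?_
    have h2 : μ₁ (Set.Ioc a b) ≤ ENNReal.ofReal C₁ * ENNReal.ofReal (b - a) := by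
      have := hμ₁le _ (measurableSet_Ioc (a := a) (b := b))
      rwa [Real.volume_Ioc] at this
    calc ENNReal.ofReal Ms * μ₁ (Set.Ioc a b)
        ≤ ENNReal.ofReal Ms * (ENNReal.ofReal C₁ * ENNReal.ofReal (b - a)) :=
          mul_le_mul_right h2 _
      _ = ENNReal.ofReal (C₁ * Ms * (b - a)) := by
          rw [← ENNReal.ofReal_mul hC₁.le, ← ENNReal.ofReal_mul hMs0]
          congr 1; ring
  have hν₂Ioc : ∀ a b : ℝ, a ≤ b → ν₂ (Set.Ioc a b) ≤ ENNReal.ofReal (C₂ * Ms' * (b - a)) := by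
    intro a b hab
    rw [hν₂app _ measurableSet_Ioc]
    refine le_trans (hstrip₂ _ measurableSet_Ioc) ?_
    have h2 : μ₂ (Set.Ioc a b) ≤ ENNReal.ofReal C₂ * ENNReal.ofReal (b - a) := by
      have := hμ₂le _ (measurableSet_Ioc (a := a) (b := b))
      rwa [Real.volume_Ioc] at this
    calc ENNReal.ofReal Ms' * μ₂ (Set.Ioc a b)
        ≤ ENNReal.ofReal Ms' * (ENNReal.ofReal C₂ * ENNReal.ofReal (b - a)) :=
          mul_le_mul_right h2 _
      _ = ENNReal.ofReal (C₂ * Ms' * (b - a)) := by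
          rw [← ENNReal.ofReal_mul hC₂.le, ← ENNReal.ofReal_mul hMs'0]
          congr 1; ring
  -- integrability
  have hν₁bdd : ν₁ (Set.Icc (-R) R)ᶜ = 0 := by
    rw [hν₁app _ measurableSet_Icc.compl, hconc]
    have hemp : Prod.fst ⁻¹' (Set.Icc (-R) R)ᶜ ∩ K = ∅ := by
      ext z
      simp only [Set.mem_inter_iff, Set.mem_preimage, Set.mem_compl_iff,
        Set.mem_empty_iff_false, iff_false, not_and]
      intro hz hzK
      exact hz (abs_le.1 (hR z hzK).1)
    rw [hemp, measure_empty]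
  have hν₂bdd : ν₂ (Set.Icc (-R) R)ᶜ = 0 := by
    rw [hν₂app _ measurableSet_Icc.compl, hconc]
    have hemp : Prod.snd ⁻¹' (Set.Icc (-R) R)ᶜ ∩ K = ∅ := by
      ext z
      simp only [Set.mem_inter_iff, Set.mem_preimage, Set.mem_compl_iff,
        Set.mem_empty_iff_false, iff_false, not_and]
      intro hz hzK
      exact hz (abs_le.1 (hR z hzK).2)
    rw [hemp, measure_empty]
  have hint : ∀ (ν : Measure ℝ), IsFiniteMeasure ν → ν (Set.Icc (-R) R)ᶜ = 0 →
      ∀ t : ℝ, Integrable (fun α => |t - α|) ν := by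
    intro ν hfin hz t
    refine Integrable.mono' (integrable_const (|t| + R))
      ((continuous_const.sub continuous_id).abs.aestronglyMeasurable) ?_
    have hae : ∀ᵐ α ∂ν, α ∈ Set.Icc (-R) R := by
      rw [ae_iff]
      refine measure_mono_null ?_ hz
      intro α hα
      exact hα
    filter_upwards [hae] with α hα
    rw [Real.norm_eq_abs, abs_abs]
    have hαR : |α| ≤ R := abs_le.2 ⟨hα.1, hα.2⟩
    calc |t - α| ≤ |t| + |α| := abs_sub t α
      _ ≤ |t| + R := by linarith
  have hint₁ : ∀ t : ℝ, Integrable (fun α => |t - α|) ν₁ := hint ν₁ hν₁fin hν₁bdd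
  have hint₂ : ∀ t : ℝ, Integrable (fun α => |t - α|) ν₂ := hint ν₂ hν₂fin hν₂bdd
  -- decomposition of F
  set g : ℝ → ℝ := fun t => ∫ α, |t - α| ∂ν₁ with hgdef
  set h : ℝ → ℝ := fun t => ∫ α, |t - α| ∂ν₂ with hhdef
  have hrestr : μ.restrict K = μ := by
    apply Measure.restrict_eq_self_of_ae_mem
    rw [ae_iff]
    exact hsupp
  have hcomp₁ : ∀ t : ℝ, Integrable (fun p : ℝ × ℝ => |t - p.1|) μ := by
    intro t
    have := (integrable_map_measure
      ((continuous_const.sub continuous_id).abs.aestronglyMeasurable)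
      measurable_fst.aemeasurable).1 (hint₁ t)
    exact this
  have hcomp₂ : ∀ t : ℝ, Integrable (fun p : ℝ × ℝ => |t - p.2|) μ := by
    intro t
    have := (integrable_map_measure
      ((continuous_const.sub continuous_id).abs.aestronglyMeasurable)
      measurable_snd.aemeasurable).1 (hint₂ t)
    exact this
  have hFgh : ∀ z : ℝ × ℝ, F z = g z.1 + h z.2 := by
    intro z
    rw [hF z]
    calc ∫ p in K, (|z.1 - p.1| + |z.2 - p.2|) ∂μ
        = ∫ p, (|z.1 - p.1| + |z.2 - p.2|) ∂μ := by rw [hrestr]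
      _ = (∫ p, |z.1 - p.1| ∂μ) + ∫ p, |z.2 - p.2| ∂μ :=
          integral_add (hcomp₁ z.1) (hcomp₂ z.2)
      _ = g z.1 + h z.2 := by
          congr 1
          · exact (integral_map measurable_fst.aemeasurable
              (Continuous.aestronglyMeasurable (by exact (continuous_const.sub continuous_id).abs) :
                AEStronglyMeasurable (fun α : ℝ => |z.1 - α|) (μ.map Prod.fst))).symm
          · exact (integral_map measurable_snd.aemeasurable
              (Continuous.aestronglyMeasurable (by exact (continuous_const.sub continuous_id).abs) :
                AEStronglyMeasurable (fun α : ℝ => |z.2 - α|) (μ.map Prod.snd))).symm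
  -- derivatives
  set Dg : ℝ → ℝ := fun x => (ν₁ (Set.Iio x)).toReal - (ν₁ (Set.Ioi x)).toReal with hDgdef
  set Dh : ℝ → ℝ := fun x => (ν₂ (Set.Iio x)).toReal - (ν₂ (Set.Ioi x)).toReal with hDhdef
  have hg' : ∀ x : ℝ, HasDerivAt g (Dg x) x := fun x =>
    core_deriv ν₁ (C₁ * Ms) (by positivity) hν₁Ioc hint₁ x
  have hh' : ∀ x : ℝ, HasDerivAt h (Dh x) x := fun x =>
    core_deriv ν₂ (C₂ * Ms') (by positivity) hν₂Ioc hint₂ x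
  constructor
  · -- Lipschitz gradient
    refine ⟨2 * (C₁ * Ms) + 2 * (C₂ * Ms'), by positivity, ?_⟩
    intro p q
    have hFe : F = fun z : ℝ × ℝ => g z.1 + h z.2 := funext hFgh
    have hfd : ∀ z : ℝ × ℝ, HasFDerivAt F
        (((1 : ℝ →L[ℝ] ℝ).smulRight (Dg z.1)).comp (ContinuousLinearMap.fst ℝ ℝ ℝ)
          + ((1 : ℝ →L[ℝ] ℝ).smulRight (Dh z.2)).comp (ContinuousLinearMap.snd ℝ ℝ ℝ)) z := by
      intro z
      rw [hFe]
      exact (((hg' z.1).hasFDerivAt).comp z hasFDerivAt_fst).add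
        (((hh' z.2).hasFDerivAt).comp z hasFDerivAt_snd)
    rw [(hfd p).fderiv, (hfd q).fderiv]
    have hval : ∀ (a b : ℝ) (w : ℝ × ℝ),
        ((((1 : ℝ →L[ℝ] ℝ).smulRight a).comp (ContinuousLinearMap.fst ℝ ℝ ℝ)
          + ((1 : ℝ →L[ℝ] ℝ).smulRight b).comp (ContinuousLinearMap.snd ℝ ℝ ℝ)) :
            ℝ × ℝ →L[ℝ] ℝ) w = w.1 * a + w.2 * b := by
      intro a b w
      simp [ContinuousLinearMap.smulRight_apply]
    refine ContinuousLinearMap.opNorm_le_bound _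
      (mul_nonneg (by positivity) (norm_nonneg _)) ?_
    intro w
    rw [ContinuousLinearMap.sub_apply, hval, hval]
    have e1 : |w.1| ≤ ‖w‖ := norm_fst_le w
    have e2 : |w.2| ≤ ‖w‖ := norm_snd_le w
    have e3 : |p.1 - q.1| ≤ ‖p - q‖ := by
      have := norm_fst_le (p - q)
      simpa using this
    have e4 : |p.2 - q.2| ≤ ‖p - q‖ := by
      have := norm_snd_le (p - q)
      simpa using this
    have hq1 : |Dg p.1 - Dg q.1| ≤ 2 * (C₁ * Ms) * |p.1 - q.1| := by
      have h0 := (core_lip ν₁ (C₁ * Ms) (by positivity) hν₁Ioc q.1 p.1).2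
      simp only [hDgdef]
      rwa [abs_sub_comm q.1 p.1] at h0
    have hq2 : |Dh p.2 - Dh q.2| ≤ 2 * (C₂ * Ms') * |p.2 - q.2| := by
      have h0 := (core_lip ν₂ (C₂ * Ms') (by positivity) hν₂Ioc q.2 p.2).2
      simp only [hDhdef]
      rwa [abs_sub_comm q.2 p.2] at h0
    have hq1' : |Dg p.1 - Dg q.1| ≤ 2 * (C₁ * Ms) * ‖p - q‖ :=
      le_trans hq1 (mul_le_mul_of_nonneg_left e3 (by positivity))
    have hq2' : |Dh p.2 - Dh q.2| ≤ 2 * (C₂ * Ms') * ‖p - q‖ :=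
      le_trans hq2 (mul_le_mul_of_nonneg_left e4 (by positivity))
    have heq0 : w.1 * Dg p.1 + w.2 * Dh p.2 - (w.1 * Dg q.1 + w.2 * Dh q.2)
        = w.1 * (Dg p.1 - Dg q.1) + w.2 * (Dh p.2 - Dh q.2) := by ring
    rw [Real.norm_eq_abs, heq0]
    have m1 : |w.1| * |Dg p.1 - Dg q.1| ≤ ‖w‖ * (2 * (C₁ * Ms) * ‖p - q‖) :=
      mul_le_mul e1 hq1' (abs_nonneg _) (norm_nonneg _)
    have m2 : |w.2| * |Dh p.2 - Dh q.2| ≤ ‖w‖ * (2 * (C₂ * Ms') * ‖p - q‖) :=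
      mul_le_mul e2 hq2' (abs_nonneg _) (norm_nonneg _)
    calc |w.1 * (Dg p.1 - Dg q.1) + w.2 * (Dh p.2 - Dh q.2)|
        ≤ |w.1 * (Dg p.1 - Dg q.1)| + |w.2 * (Dh p.2 - Dh q.2)| := abs_add_le _ _
      _ = |w.1| * |Dg p.1 - Dg q.1| + |w.2| * |Dh p.2 - Dh q.2| := by
          rw [abs_mul, abs_mul]
      _ ≤ ‖w‖ * (2 * (C₁ * Ms) * ‖p - q‖) + ‖w‖ * (2 * (C₂ * Ms') * ‖p - q‖) :=
          add_le_add m1 m2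
      _ = (2 * (C₁ * Ms) + 2 * (C₂ * Ms')) * ‖p - q‖ * ‖w‖ := by ring
  · -- derivative difference formula
    intro p q
    have hder : ∀ y x : ℝ, deriv (fun t => F (t, y)) x = Dg x := by
      intro y x
      have hfun : (fun t => F (t, y)) = fun t => g t + h y := by
        funext t
        exact hFgh (t, y)
      rw [hfun]
      exact ((hg' x).add_const (h y)).deriv
    rw [hder q.2 q.1, hder p.2 p.1]
    obtain ⟨hEq, hLe⟩ := core_lip ν₁ (C₁ * Ms) (by positivity) hν₁Ioc p.1 q.1
    simp only [hDgdef]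
    constructor
    · rw [hEq]
      congr 1
      rw [hν₁app _ measurableSet_Ioo, hconc]
      congr 2
      ext z
      simp only [Set.mem_inter_iff, Set.mem_preimage, Set.mem_Ioo, Set.mem_setOf_eq]
      tauto
    · refine le_trans hLe (le_of_eq ?_)
      ring
end

section
/- Let (X_k) be the stochastic recursion X_0 = x_0 ∈ K, X_{k+1} = X_k − t_{k+1} Q_{k+1}, where Q_{k+1} ∈ {(±1,±1)} has signs determined by componentwise comparison of X_k with an independent μ-distributed sample P_{k+1} (sign +1 in coordinate i iff X_k^{(i)} ≥ P_{k+1}^{(i)}). Assuming Condition (C.3) for μ, the conditional expectation satisfies E(Q_{i} | X_{i−1}) = grad F_{K,μ}(X_{i−1}) for all i ≥ 1, and consequently E(X_k) = x_0 − Σ_{i=1}^k t_i E(grad F_{K,μ}(X_{i−1})). -/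
open MeasureTheory

namespace Stmt19Aux

noncomputable def phi (z p : ℝ × ℝ) : ℝ × ℝ :=
  ((if p.1 ≤ z.1 then (1:ℝ) else -1), (if p.2 ≤ z.2 then (1:ℝ) else -1))

lemma measurable_phi : Measurable (fun q : (ℝ × ℝ) × (ℝ × ℝ) => phi q.1 q.2) := by
  apply Measurable.prod
  · exact Measurable.ite (measurableSet_le (measurable_snd.fst) (measurable_fst.fst))
      measurable_const measurable_const
  · exact Measurable.ite (measurableSet_le (measurable_snd.snd) (measurable_fst.snd))
      measurable_const measurable_const

lemma norm_phi_le (z p : ℝ × ℝ) : ‖phi z p‖ ≤ 1 := by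
  rw [phi, Prod.norm_def]
  have h : ∀ (b : Prop) (_ : Decidable b), ‖if b then (1:ℝ) else -1‖ ≤ 1 := by
    intro b hb
    rw [Real.norm_eq_abs]
    split <;> simp
  exact max_le (h _ _) (h _ _)

noncomputable def Xf (t : ℕ → ℝ) (x0 : ℝ × ℝ) (p : ℕ → ℝ × ℝ) : ℕ → ℝ × ℝ
  | 0 => x0
  | k + 1 => Xf t x0 p k - t (k + 1) • phi (Xf t x0 p k) (p (k + 1))

lemma Xf_congr (t : ℕ → ℝ) (x0 : ℝ × ℝ) (p p' : ℕ → ℝ × ℝ) (k : ℕ)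
    (h : ∀ i, 1 ≤ i → i ≤ k → p i = p' i) : Xf t x0 p k = Xf t x0 p' k := by
  induction k with
  | zero => rfl
  | succ k ih =>
    have h1 : Xf t x0 p k = Xf t x0 p' k := ih fun i h1 h2 => h i h1 (h2.trans k.le_succ)
    simp only [Xf, h1, h (k+1) (by omega) le_rfl]

lemma measurable_Xf (t : ℕ → ℝ) (x0 : ℝ × ℝ) (k : ℕ) :
    Measurable (fun p : ℕ → ℝ × ℝ => Xf t x0 p k) := by
  induction k with
  | zero => exact measurable_const
  | succ k ih =>
    simp only [Xf]
    exact ih.sub (((measurable_phi.comp (ih.prodMk (measurable_pi_apply (k+1))))).const_smul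
      (t (k+1)))

lemma key_integral (μ : Measure (ℝ × ℝ)) [IsProbabilityMeasure μ] (K : Set (ℝ × ℝ))
    (hK : MeasurableSet K) (hsupp : μ Kᶜ = 0) (f : ℝ × ℝ → ℝ) (hf : Measurable f) (a : ℝ)
    (hB : μ {p ∈ K | f p = a} = 0) :
    ∫ p, (if f p ≤ a then (1:ℝ) else -1) ∂μ =
      (μ {p ∈ K | f p < a}).toReal - (μ {p ∈ K | a < f p}).toReal := by
  set S := {p | f p ≤ a} with hSdef
  have hS : MeasurableSet S := measurableSet_le hf measurable_const
  have hfun : (fun p => if f p ≤ a then (1:ℝ) else -1)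
      = fun p => S.indicator (fun _ => (2:ℝ)) p + (-1) := by
    funext p; by_cases h : f p ≤ a <;> simp [hSdef, Set.indicator, h] <;> norm_num
  rw [hfun, integral_add ((integrable_const (2:ℝ)).indicator hS) (integrable_const _),
    integral_indicator hS, setIntegral_const, integral_const]
  simp only [measureReal_def, measure_univ, ENNReal.toReal_one, smul_eq_mul, one_mul]
  -- measure identities
  have hμS : μ S = μ {p ∈ K | f p < a} := by
    have h1 : μ (S \ K) = 0 := measure_mono_null (fun p hp => hp.2) hsupp
    have h2 : μ (S ∩ K) + μ (S \ K) = μ S := measure_inter_add_diff S hK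
    have h3 : S ∩ K = {p ∈ K | f p < a} ∪ {p ∈ K | f p = a} := by
      ext p
      simp only [hSdef, Set.mem_inter_iff, Set.mem_setOf_eq, Set.mem_union, Set.mem_sep_iff]
      constructor
      · rintro ⟨hle, hK⟩
        rcases lt_or_eq_of_le hle with h | h
        · exact Or.inl ⟨hK, h⟩
        · exact Or.inr ⟨hK, h⟩
      · rintro (⟨hK, h⟩ | ⟨hK, h⟩)
        · exact ⟨le_of_lt h, hK⟩
        · exact ⟨le_of_eq h, hK⟩
    have h4 : μ (S ∩ K) = μ {p ∈ K | f p < a} := by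
      rw [h3]
      exact le_antisymm (le_trans (measure_union_le _ _) (by rw [hB, add_zero]))
        (measure_mono Set.subset_union_left)
    rw [← h2, h1, add_zero] at *
    rw [h2, h4]
  have hμSc : μ Sᶜ = μ {p ∈ K | a < f p} := by
    have h1 : μ (Sᶜ \ K) = 0 := measure_mono_null (fun p hp => hp.2) hsupp
    have h2 : μ (Sᶜ ∩ K) + μ (Sᶜ \ K) = μ Sᶜ := measure_inter_add_diff Sᶜ hK
    have h3 : Sᶜ ∩ K = {p ∈ K | a < f p} := by
      ext p
      simp only [hSdef, Set.mem_inter_iff, Set.mem_compl_iff, Set.mem_setOf_eq, Set.mem_sep_iff,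
        not_le]
      exact And.comm
    rw [h1, add_zero, h3] at h2
    exact h2.symm
  have hsum : μ S + μ Sᶜ = 1 := by rw [measure_add_measure_compl hS, measure_univ]
  have hfin1 : μ S ≠ ⊤ := measure_ne_top _ _
  have hfin2 : μ Sᶜ ≠ ⊤ := measure_ne_top _ _
  have hsum' : (μ S).toReal + (μ Sᶜ).toReal = 1 := by
    rw [← ENNReal.toReal_add hfin1 hfin2, hsum, ENNReal.toReal_one]
  rw [← hμS, ← hμSc]
  linarith

lemma integral_phi (μ : Measure (ℝ × ℝ)) [IsProbabilityMeasure μ] (K : Set (ℝ × ℝ))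
    (hK : MeasurableSet K) (hsupp : μ Kᶜ = 0)
    (hC3 : ∀ x : ℝ, μ {p ∈ K | p.1 = x} = 0 ∧ μ {p ∈ K | p.2 = x} = 0) (z : ℝ × ℝ) :
    ∫ p, phi z p ∂μ =
      ((μ {p ∈ K | p.1 < z.1}).toReal - (μ {p ∈ K | z.1 < p.1}).toReal,
       (μ {p ∈ K | p.2 < z.2}).toReal - (μ {p ∈ K | z.2 < p.2}).toReal) := by
  have hmeas : Measurable (phi z) := measurable_phi.comp (measurable_const.prodMk measurable_id)
  have hint : Integrable (phi z) μ := by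
    refine (integrable_const (1:ℝ)).mono' hmeas.aestronglyMeasurable ?_
    filter_upwards with p using norm_phi_le z p
  have h1 := (ContinuousLinearMap.fst ℝ ℝ ℝ).integral_comp_comm hint
  have h2 := (ContinuousLinearMap.snd ℝ ℝ ℝ).integral_comp_comm hint
  simp only [ContinuousLinearMap.coe_fst', ContinuousLinearMap.coe_snd'] at h1 h2
  apply Prod.ext
  · rw [← h1]
    simp only [phi]
    exact key_integral μ K hK hsupp (fun p => p.1) measurable_fst z.1 (hC3 z.1).1
  · rw [← h2]
    simp only [phi]
    exact key_integral μ K hK hsupp (fun p => p.2) measurable_snd z.2 (hC3 z.2).2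

lemma measurable_G (μ : Measure (ℝ × ℝ)) [IsFiniteMeasure μ] (K : Set (ℝ × ℝ)) :
    Measurable (fun z : ℝ × ℝ =>
      ((μ {p ∈ K | p.1 < z.1}).toReal - (μ {p ∈ K | z.1 < p.1}).toReal,
       (μ {p ∈ K | p.2 < z.2}).toReal - (μ {p ∈ K | z.2 < p.2}).toReal)) := by
  have m1 : Monotone (fun a : ℝ => (μ {p ∈ K | p.1 < a}).toReal) := by
    intro a b hab
    exact ENNReal.toReal_mono (measure_ne_top _ _)
      (measure_mono fun p hp => ⟨hp.1, hp.2.trans_le hab⟩)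
  have a1 : Antitone (fun a : ℝ => (μ {p ∈ K | a < p.1}).toReal) := by
    intro a b hab
    exact ENNReal.toReal_mono (measure_ne_top _ _)
      (measure_mono fun p hp => ⟨hp.1, hab.trans_lt hp.2⟩)
  have m2 : Monotone (fun a : ℝ => (μ {p ∈ K | p.2 < a}).toReal) := by
    intro a b hab
    exact ENNReal.toReal_mono (measure_ne_top _ _)
      (measure_mono fun p hp => ⟨hp.1, hp.2.trans_le hab⟩)
  have a2 : Antitone (fun a : ℝ => (μ {p ∈ K | a < p.2}).toReal) := by
    intro a b hab
    exact ENNReal.toReal_mono (measure_ne_top _ _)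
      (measure_mono fun p hp => ⟨hp.1, hab.trans_lt hp.2⟩)
  exact ((m1.measurable.comp measurable_fst).sub (a1.measurable.comp measurable_fst)).prod
    ((m2.measurable.comp measurable_snd).sub (a2.measurable.comp measurable_snd))

end Stmt19Aux

open Stmt19Aux

theorem stmt19 (K : Set (ℝ × ℝ)) (hKne : K.Nonempty) (hKc : IsCompact K)
    (hKcl : K = closure (interior K))
    (μ : Measure (ℝ × ℝ)) [IsProbabilityMeasure μ] (hsupp : μ Kᶜ = 0)
    (hC3 : ∀ x : ℝ, μ {p ∈ K | p.1 = x} = 0 ∧ μ {p ∈ K | p.2 = x} = 0)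
    (Ω : Type*) [MeasurableSpace Ω] (ℙ : Measure Ω) [IsProbabilityMeasure ℙ]
    (P : ℕ → Ω → ℝ × ℝ) (hPmeas : ∀ k, Measurable (P k))
    (hPlaw : ∀ k, Measure.map (P k) ℙ = μ)
    (hPindep : ProbabilityTheory.iIndepFun P ℙ)
    (t : ℕ → ℝ) (ht : ∀ k, 0 < t k) (x0 : ℝ × ℝ) (hx0 : x0 ∈ K)
    (Q X : ℕ → Ω → ℝ × ℝ)
    (hQ : ∀ k ω, Q (k + 1) ω =
      ((if (P (k + 1) ω).1 ≤ (X k ω).1 then (1:ℝ) else -1),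
       (if (P (k + 1) ω).2 ≤ (X k ω).2 then (1:ℝ) else -1)))
    (hX0 : ∀ ω, X 0 ω = x0)
    (hXrec : ∀ k ω, X (k + 1) ω = X k ω - t (k + 1) • Q (k + 1) ω)
    (G : ℝ × ℝ → ℝ × ℝ)
    (hG : ∀ z : ℝ × ℝ, G z =
      ((μ {p ∈ K | p.1 < z.1}).toReal - (μ {p ∈ K | z.1 < p.1}).toReal,
       (μ {p ∈ K | p.2 < z.2}).toReal - (μ {p ∈ K | z.2 < p.2}).toReal)) :
    (∀ i : ℕ,
      ℙ[Q (i + 1)|MeasurableSpace.comap (X i) inferInstance] =ᵐ[ℙ]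
        fun ω => G (X i ω)) ∧
    (∀ k : ℕ, ∫ ω, X k ω ∂ℙ =
      x0 - ∑ i ∈ Finset.range k, t (i + 1) • ∫ ω, G (X i ω) ∂ℙ) := by
  classical
  have hKmeas : MeasurableSet K := hKc.isClosed.measurableSet
  -- X as deterministic function of the P's
  have hXeq : ∀ k ω, X k ω = Xf t x0 (fun i => P i ω) k := by
    intro k
    induction k with
    | zero => intro ω; rw [hX0]; rfl
    | succ k ih =>
      intro ω
      rw [hXrec, hQ, ih ω]
      simp only [Xf, phi]
  have hXm : ∀ k, Measurable (X k) := by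
    intro k
    have h : X k = fun ω => Xf t x0 (fun i => P i ω) k := funext (hXeq k)
    rw [h]
    exact (measurable_Xf t x0 k).comp (measurable_pi_lambda _ fun i => hPmeas i)
  have hQeq : ∀ k ω, Q (k + 1) ω = phi (X k ω) (P (k + 1) ω) := by
    intro k ω; rw [hQ]; rfl
  have hQm : ∀ k, Measurable (Q (k + 1)) := by
    intro k
    have h : Q (k + 1) = fun ω => phi (X k ω) (P (k + 1) ω) := funext (hQeq k)
    rw [h]
    exact measurable_phi.comp ((hXm k).prodMk (hPmeas (k + 1)))
  have hQint : ∀ k, Integrable (Q (k + 1)) ℙ := by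
    intro k
    refine (integrable_const (1:ℝ)).mono' (hQm k).aestronglyMeasurable ?_
    filter_upwards with ω
    rw [hQeq]; exact norm_phi_le _ _
  have hGz : ∀ z, G z = ∫ p, phi z p ∂μ := by
    intro z; rw [hG, integral_phi μ K hKmeas hsupp hC3]
  have hGm : Measurable G := by
    have h : G = fun z : ℝ × ℝ =>
        ((μ {p ∈ K | p.1 < z.1}).toReal - (μ {p ∈ K | z.1 < p.1}).toReal,
         (μ {p ∈ K | p.2 < z.2}).toReal - (μ {p ∈ K | z.2 < p.2}).toReal) := funext hG
    rw [h]; exact measurable_G μ K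
  have hGnorm : ∀ z, ‖G z‖ ≤ 1 := by
    intro z
    rw [hGz]
    calc ‖∫ p, phi z p ∂μ‖ ≤ 1 * (μ Set.univ).toReal :=
          norm_integral_le_of_norm_le_const (by filter_upwards with p using norm_phi_le z p)
    _ = 1 := by simp
  have hGXint : ∀ k, Integrable (fun ω => G (X k ω)) ℙ := by
    intro k
    refine (integrable_const (1:ℝ)).mono' (hGm.comp (hXm k)).aestronglyMeasurable ?_
    filter_upwards with ω using hGnorm _
  -- independence of X k and P (k+1)
  have hindep : ∀ k, ProbabilityTheory.IndepFun (X k) (P (k + 1)) ℙ := by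
    intro k
    set S : Finset ℕ := Finset.range (k + 1) with hS
    have hST : Disjoint S ({k + 1} : Finset ℕ) := by
      simp [hS, Finset.disjoint_singleton_right, Finset.mem_range]
    have h := hPindep.indepFun_finset S {k + 1} hST hPmeas
    set g : (S → ℝ × ℝ) → ℝ × ℝ :=
      fun v => Xf t x0 (fun i => if h : i ∈ S then v ⟨i, h⟩ else 0) k with hg
    have hgm : Measurable g := by
      apply (measurable_Xf t x0 k).comp
      apply measurable_pi_lambda
      intro i
      by_cases hi : i ∈ S
      · simp only [dif_pos hi]; exact measurable_pi_apply _
      · simp only [dif_neg hi]; exact measurable_const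
    set e : (({k + 1} : Finset ℕ) → ℝ × ℝ) → ℝ × ℝ :=
      fun v => v ⟨k + 1, Finset.mem_singleton_self _⟩ with he
    have hem : Measurable e := measurable_pi_apply _
    have h2 := h.comp hgm hem
    have hgc : g ∘ (fun a (i : S) => P i a) = X k := by
      funext ω
      simp only [Function.comp_apply, hg]
      rw [hXeq k ω]
      apply Xf_congr
      intro i h1 h2
      have hi : i ∈ S := by simp [hS, Finset.mem_range]; omega
      simp only [dif_pos hi]
    have hec : e ∘ (fun a (i : ({k + 1} : Finset ℕ)) => P i a) = P (k + 1) := rfl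
    rwa [hgc, hec] at h2
  have hmap : ∀ k, Measure.map (fun ω => (X k ω, P (k + 1) ω)) ℙ
      = (Measure.map (X k) ℙ).prod μ := by
    intro k
    rw [← hPlaw (k + 1)]
    exact (ProbabilityTheory.indepFun_iff_map_prod_eq_prod_map_map
      (hXm k).aemeasurable (hPmeas _).aemeasurable).mp (hindep k)
  -- set integral identity
  have hset : ∀ k (u : Set (ℝ × ℝ)), MeasurableSet u →
      ∫ ω in (X k) ⁻¹' u, Q (k + 1) ω ∂ℙ = ∫ ω in (X k) ⁻¹' u, G (X k ω) ∂ℙ := by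
    intro k u hu
    set ν := Measure.map (X k) ℙ with hν
    haveI : IsProbabilityMeasure ν := Measure.isProbabilityMeasure_map (hXm k).aemeasurable
    set Ψ : (ℝ × ℝ) × (ℝ × ℝ) → ℝ × ℝ :=
      (u ×ˢ (Set.univ : Set (ℝ × ℝ))).indicator (fun q => phi q.1 q.2) with hΨ
    have hΨm : Measurable Ψ := measurable_phi.indicator (hu.prod MeasurableSet.univ)
    have step1 : ∫ ω in (X k) ⁻¹' u, Q (k + 1) ω ∂ℙ
        = ∫ ω, Ψ (X k ω, P (k + 1) ω) ∂ℙ := by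
      rw [← integral_indicator ((hXm k) hu)]
      congr 1
      funext ω
      by_cases hω : X k ω ∈ u
      · rw [Set.indicator_of_mem (show ω ∈ X k ⁻¹' u from hω), hΨ,
          Set.indicator_of_mem (Set.mk_mem_prod hω (Set.mem_univ _)), hQeq]
      · rw [Set.indicator_of_notMem (show ω ∉ X k ⁻¹' u from hω), hΨ,
          Set.indicator_of_notMem (fun hc => hω hc.1)]
    have step2 : ∫ ω, Ψ (X k ω, P (k + 1) ω) ∂ℙ = ∫ q, Ψ q ∂(ν.prod μ) := by
      rw [← hmap k]
      exact (integral_map ((hXm k).prodMk (hPmeas _)).aemeasurable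
        hΨm.aestronglyMeasurable).symm
    have step3 : ∫ q, Ψ q ∂(ν.prod μ)
        = ∫ q, phi q.1 q.2 ∂((ν.restrict u).prod μ) := by
      have hres := Measure.prod_restrict (μ := ν) (ν := μ) u Set.univ
      rw [Measure.restrict_univ] at hres
      rw [hΨ, integral_indicator (hu.prod MeasurableSet.univ), ← hres]
    have hphi_int : Integrable (fun q : (ℝ × ℝ) × (ℝ × ℝ) => phi q.1 q.2)
        ((ν.restrict u).prod μ) := by
      refine (integrable_const (1:ℝ)).mono' measurable_phi.aestronglyMeasurable ?_
      filter_upwards with q using norm_phi_le _ _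
    have step4 : ∫ q, phi q.1 q.2 ∂((ν.restrict u).prod μ)
        = ∫ x in u, G x ∂ν := by
      rw [MeasureTheory.integral_prod _ hphi_int]
      exact integral_congr_ae (by filter_upwards with x using (hGz x).symm)
    have step5 : ∫ x in u, G x ∂ν = ∫ ω in (X k) ⁻¹' u, G (X k ω) ∂ℙ :=
      setIntegral_map hu hGm.aestronglyMeasurable (hXm k).aemeasurable
    rw [step1, step2, step3, step4, step5]
  -- part 1
  have part1 : ∀ i : ℕ,
      ℙ[Q (i + 1)|MeasurableSpace.comap (X i) inferInstance] =ᵐ[ℙ]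
        fun ω => G (X i ω) := by
    intro i
    have hm : MeasurableSpace.comap (X i) inferInstance ≤ (inferInstance : MeasurableSpace Ω) :=
      (hXm i).comap_le
    refine (ae_eq_condExp_of_forall_setIntegral_eq hm (hQint i) ?_ ?_ ?_).symm
    · intro s hs hμs
      exact (hGXint i).integrableOn
    · rintro s ⟨u, hu, rfl⟩ hμs
      exact (hset i u hu).symm
    · refine StronglyMeasurable.aestronglyMeasurable ?_
      refine Measurable.stronglyMeasurable ?_
      exact hGm.comp (measurable_iff_comap_le.mpr le_rfl)
  refine ⟨part1, ?_⟩
  -- part 2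
  have hXint : ∀ k, Integrable (X k) ℙ := by
    intro k
    induction k with
    | zero =>
      rw [show X 0 = fun _ => x0 from funext hX0]
      exact integrable_const x0
    | succ k ih =>
      rw [show X (k + 1) = fun ω => X k ω - t (k + 1) • Q (k + 1) ω from funext (hXrec k)]
      exact ih.sub ((hQint k).smul (t (k + 1)))
  have hQG : ∀ i, ∫ ω, Q (i + 1) ω ∂ℙ = ∫ ω, G (X i ω) ∂ℙ := by
    intro i
    have hm : MeasurableSpace.comap (X i) inferInstance ≤ (inferInstance : MeasurableSpace Ω) :=
      (hXm i).comap_le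
    rw [← integral_condExp hm (f := Q (i + 1))]
    exact integral_congr_ae (part1 i)
  intro k
  induction k with
  | zero =>
    rw [show X 0 = fun _ => x0 from funext hX0]
    simp
  | succ k ih =>
    have h1 : ∫ ω, X (k + 1) ω ∂ℙ = ∫ ω, X k ω ∂ℙ - t (k + 1) • ∫ ω, Q (k + 1) ω ∂ℙ := by
      have hsm : Integrable (fun ω => t (k + 1) • Q (k + 1) ω) ℙ := (hQint k).smul (t (k + 1))
      rw [← integral_smul, ← integral_sub (hXint k) hsm]
      apply integral_congr_ae
      filter_upwards with ω
      rw [hXrec]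
    rw [h1, hQG, ih, Finset.sum_range_succ, sub_sub]
end
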